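/- arXiv:1903.02714 — 6 statements merged into one kernel-verified Lean document; each statement's English description precedes it below -/
import Mathlib

section
/- Let u_{a,α}(λ,·) denote, for each λ ∈ ℝ, the solution of -u'' + Vu = λu on [a,b] with a δ-interaction of strength α at p, satisfying u(a) = sin θ, u'(a) = -cos θ. Then for any x ∈ [a,b] \ {p} with u_{a,α}'(λ,x) ≠ 0, ∂/∂λ [ u_{a,α}(λ,x) / u_{a,α}'(λ,x) ] = (1 / u_{a,α}'(λ,x)²) ∫_a^x u_{a,α}(λ,t)² dt. -/
open Filter Topology Set MeasureTheory

set_option maxHeartbeats 1000000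

/-- **Atkinson-type identity for the λ-derivative of `u/u'`.**
Let `u α λ x = u_{a,α}(λ,x)` be the solution of `-u'' + V u = λ u` on `[a,b]` with a
δ-interaction of strength `α` at `p`, normalized by `u(λ,a) = sin θ`, `u'(λ,a) = -cos θ`,
depending differentiably (entirely) on `λ`.  Then for `x ∈ [a,b] \ {p}` with
`u'(λ,x) ≠ 0`,
`∂/∂λ [u(λ,x)/u'(λ,x)] = (1/u'(λ,x)²) ∫_a^x u(λ,t)² dt`. -/
theorem atkinson_lambda_derivative_quot
    (V : ℝ → ℝ) (a b p α θ : ℝ) (hab : a < b) (hp : p ∈ Ioo a b)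
    (hθ : θ ∈ Ico 0 Real.pi) (hV : IntegrableOn V (Icc a b))
    (u u' : ℝ → ℝ → ℝ)  -- u lam t, u' lam t
    -- for each λ, a solution with δ-interaction of strength α at p
    (hderiv : ∀ lam : ℝ, ∀ t ∈ Icc a b, t ≠ p → HasDerivAt (u lam) (u' lam t) t)
    (hode : ∀ lam : ℝ, ∀ t ∈ Icc a b, t ≠ p →
      HasDerivAt (u' lam) (V t * u lam t - lam * u lam t) t)
    (hcontR : ∀ lam : ℝ, Tendsto (u lam) (𝓝[>] p) (𝓝 (u lam p)))
    (hcontL : ∀ lam : ℝ, Tendsto (u lam) (𝓝[<] p) (𝓝 (u lam p)))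
    (hderR : ∀ lam : ℝ, Tendsto (u' lam) (𝓝[>] p) (𝓝 (u' lam p)))
    (hjump : ∀ lam : ℝ, ∃ dm, Tendsto (u' lam) (𝓝[<] p) (𝓝 dm) ∧
      u' lam p - dm = α * u lam p)
    -- boundary normalization at a
    (hic : ∀ lam : ℝ, u lam a = Real.sin θ ∧ u' lam a = -Real.cos θ)
    -- entire dependence on λ for each fixed x
    (hentire : ∀ t : ℝ, Differentiable ℝ (fun l => u l t) ∧ Differentiable ℝ (fun l => u' l t))
    (lam x : ℝ) (hx : x ∈ Icc a b) (hxp : x ≠ p) (h0 : u' lam x ≠ 0) :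
    deriv (fun l => u l x / u' l x) lam
      = (1 / (u' lam x) ^ 2) * ∫ t in a..x, (u lam t) ^ 2 := by
  obtain ⟨hap, hpb⟩ := hp
  have hax : a ≤ x := hx.1
  have hxb : x ≤ b := hx.2
  have hanep : a ≠ p := ne_of_lt hap
  -- continuity of `u m` at every point of `[a,b]`
  have hucont : ∀ m : ℝ, ∀ t ∈ Icc a b, ContinuousAt (u m) t := by
    intro m t ht
    rcases eq_or_ne t p with rfl | htp
    · rw [ContinuousAt, ← nhdsNE_sup_pure, ← nhdsLT_sup_nhdsGT]
      refine Tendsto.sup (Tendsto.sup (hcontL m) (hcontR m)) ?_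
      exact tendsto_pure_nhds (u m) t
    · exact (hderiv m t ht htp).continuousAt
  -- continuity of `u' m` away from `p`
  have hu'cont : ∀ m : ℝ, ∀ t ∈ Icc a b, t ≠ p → ContinuousAt (u' m) t := by
    intro m t ht htp
    exact (hode m t ht htp).continuousAt
  -- `u' m` is continuous on `[p, b]`
  have hu'contR : ∀ m : ℝ, ContinuousOn (u' m) (Icc p b) := by
    intro m t ht
    rcases eq_or_ne t p with rfl | htp
    · refine ContinuousWithinAt.mono ?_ (Icc_subset_Ici_self)
      rw [ContinuousWithinAt, ← nhdsGT_sup_nhdsWithin_singleton]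
      refine Tendsto.sup (hderR m) ?_
      refine Tendsto.mono_left (tendsto_pure_nhds (u' m) t) ?_
      simp [nhdsWithin, Filter.principal_mono]
    · exact (hu'cont m t ⟨le_trans (le_of_lt hap) ht.1, ht.2⟩ htp).continuousWithinAt
  -- `u m` continuous on any subinterval of `[a,b]`
  have huconton : ∀ m : ℝ, ∀ s : Set ℝ, s ⊆ Icc a b → ContinuousOn (u m) s := by
    intro m s hs t ht
    exact (hucont m t (hs ht)).continuousWithinAt
  -- interval integrability of products of `u`'s
  have huint : ∀ m l : ℝ, ∀ c d : ℝ, c ∈ Icc a b → d ∈ Icc a b →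
      IntervalIntegrable (fun t => u l t * u m t) volume c d := by
    intro m l c d hc hd
    apply ContinuousOn.intervalIntegrable
    intro t ht
    have hts : t ∈ Icc a b := by
      rcases le_total c d with h | h
      · rw [uIcc_of_le h] at ht; exact ⟨le_trans hc.1 ht.1, le_trans ht.2 hd.2⟩
      · rw [uIcc_of_ge h] at ht; exact ⟨le_trans hd.1 ht.1, le_trans ht.2 hc.2⟩
    exact ((hucont l t hts).mul (hucont m t hts)).continuousWithinAt
  -- ## The Lagrange identity
  have lagrange : ∀ l m : ℝ,
      (l - m) * ∫ t in a..x, u l t * u m t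
        = u l x * u' m x - u' l x * u m x := by
    intro l m
    set W : ℝ → ℝ := fun t => u l t * u' m t - u' l t * u m t with hW_def
    set g : ℝ → ℝ := fun t => (l - m) * (u l t * u m t) with hg_def
    have hW : ∀ t ∈ Icc a b, t ≠ p → HasDerivAt W (g t) t := by
      intro t ht htp
      have h1 := (hderiv l t ht htp).mul (hode m t ht htp)
      have h2 := (hode l t ht htp).mul (hderiv m t ht htp)
      refine (h1.sub h2).congr_deriv ?_
      simp only [hg_def]; ring
    have hgint : ∀ c d : ℝ, c ∈ Icc a b → d ∈ Icc a b → IntervalIntegrable g volume c d := by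
      intro c d hc hd
      exact (huint m l c d hc hd).const_mul _
    have hWa : W a = 0 := by
      simp only [hW_def, (hic l).1, (hic l).2, (hic m).1, (hic m).2]; ring
    have hWcontAt : ∀ t ∈ Icc a b, t ≠ p → ContinuousAt W t := by
      intro t ht htp
      exact ((hucont l t ht).mul (hu'cont m t ht htp)).sub
        ((hu'cont l t ht htp).mul (hucont m t ht))
    have key : ∫ t in a..x, g t = W x - W a := by
      rcases lt_or_gt_of_ne hxp with hxlt | hxgt
      · -- x < p : no jump in the way
        apply intervalIntegral.integral_eq_sub_of_hasDerivAt
        · intro t ht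
          rw [uIcc_of_le hax] at ht
          have ht' : t ∈ Icc a b := ⟨ht.1, le_trans ht.2 hxb⟩
          exact hW t ht' (ne_of_lt (lt_of_le_of_lt ht.2 hxlt))
        · exact hgint a x (left_mem_Icc.2 (le_of_lt hab)) hx
      · -- x > p : split at p
        obtain ⟨dl, hdl, hdl2⟩ := hjump l
        obtain ⟨dm, hdm, hdm2⟩ := hjump m
        have hpmem : p ∈ Icc a b := ⟨le_of_lt hap, le_of_lt hpb⟩
        have hamem : a ∈ Icc a b := left_mem_Icc.2 (le_of_lt hab)
        have hsplit := intervalIntegral.integral_add_adjacent_intervals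
          (hgint a p hamem hpmem) (hgint p x hpmem hx)
        have piece1 : ∫ t in a..p, g t = (u l p * dm - dl * u m p) - W a := by
          apply intervalIntegral.integral_eq_sub_of_hasDerivAt_of_tendsto hap
          · intro t ht
            exact hW t ⟨le_of_lt ht.1, le_trans (le_of_lt ht.2) (le_of_lt hpb)⟩
              (ne_of_lt ht.2)
          · exact hgint a p hamem hpmem
          · exact (hWcontAt a hamem hanep).continuousWithinAt
          · exact ((hcontL l).mul hdm).sub (hdl.mul (hcontL m))
        have piece2 : ∫ t in p..x, g t = W x - W p := by
          apply intervalIntegral.integral_eq_sub_of_hasDeriv_right_of_le (le_of_lt hxgt)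
          · apply ContinuousOn.sub
            · exact (huconton l _ (Icc_subset_Icc (le_of_lt hap) hxb)).mul
                ((hu'contR m).mono (Icc_subset_Icc le_rfl hxb))
            · exact ((hu'contR l).mono (Icc_subset_Icc le_rfl hxb)).mul
                (huconton m _ (Icc_subset_Icc (le_of_lt hap) hxb))
          · intro t ht
            exact (hW t ⟨le_trans (le_of_lt hap) (le_of_lt ht.1), le_trans (le_of_lt ht.2) hxb⟩
              (ne_of_gt ht.1)).hasDerivWithinAt
          · exact hgint p x hpmem hx
        have hWp : W p = u l p * dm - dl * u m p := by
          have h1 : u' m p = dm + α * u m p := by linarith [hdm2]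
          have h2 : u' l p = dl + α * u l p := by linarith [hdl2]
          simp only [hW_def, h1, h2]; ring
        rw [← hsplit, piece1, piece2, hWp]
        ring
    rw [hWa, sub_zero] at key
    rw [← intervalIntegral.integral_const_mul]
    exact key
  -- ## Uniform bound on `u m t`
  have hbound : ∃ C : ℝ, ∀ m ∈ Icc (lam - 1) (lam + 1), ∀ t ∈ Icc a b, |u m t| ≤ C := by
    set M : ℝ := |lam| + 1 with hM
    set φ : ℝ → ℝ := fun t => 1 + M + |V t| with hφ
    have hMpos : 0 < M := by positivity
    have hφnn : ∀ t, 0 ≤ φ t := by intro t; simp only [hφ]; positivity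
    have hφint0 : IntegrableOn φ (Icc a b) := by
      exact (integrableOn_const (ne_of_lt measure_Icc_lt_top)).add hV.abs
    have hφint : ∀ c d : ℝ, c ∈ Icc a b → d ∈ Icc a b → IntervalIntegrable φ volume c d := by
      intro c d hc hd
      apply IntegrableOn.intervalIntegrable
      apply hφint0.mono_set
      exact uIcc_subset_Icc hc hd
    set B := ∫ t in a..b, φ t with hBdef
    have hBnn : 0 ≤ B := intervalIntegral.integral_nonneg (le_of_lt hab) (fun t _ => hφnn t)
    have hamem : a ∈ Icc a b := left_mem_Icc.2 (le_of_lt hab)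
    have hbmem : b ∈ Icc a b := right_mem_Icc.2 (le_of_lt hab)
    have hmono : ∀ c d : ℝ, c ∈ Icc a b → d ∈ Icc a b → c ≤ d →
        (∫ t in c..d, φ t) ≤ B := by
      intro c d hc hd hcd
      have h1 := intervalIntegral.integral_add_adjacent_intervals
        (hφint a c hamem hc) (hφint c d hc hd)
      have h2 := intervalIntegral.integral_add_adjacent_intervals
        (hφint a d hamem hd) (hφint d b hd hbmem)
      have h3 : 0 ≤ ∫ t in a..c, φ t :=
        intervalIntegral.integral_nonneg hc.1 (fun t _ => hφnn t)
      have h4 : 0 ≤ ∫ t in d..b, φ t :=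
        intervalIntegral.integral_nonneg hd.2 (fun t _ => hφnn t)
      rw [hBdef]
      linarith
    set K := 2 * Real.exp B with hKdef
    have hKpos : 0 < K := by positivity
    set K1 := (3 + 2 * α * α) * K + 1 with hK1def
    have hK1pos : 0 < K1 := by nlinarith [mul_self_nonneg α, hKpos]
    clear_value M φ B K K1
    refine ⟨Real.sqrt (K1 * Real.exp B), ?_⟩
    intro m hm t ht
    have hmM : |m| ≤ M := by
      rw [abs_le]
      constructor
      · have := neg_abs_le lam; simp only [hM]; linarith [hm.1]
      · have := le_abs_self lam; simp only [hM]; linarith [hm.2]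
    set E : ℝ → ℝ := fun t => u m t * u m t + u' m t * u' m t with hE_def
    set E' : ℝ → ℝ := fun t =>
      2 * u m t * u' m t + 2 * u' m t * (V t * u m t - m * u m t) with hE'_def
    set f : ℝ → ℝ := fun t => Real.log (E t + 1) with hf_def
    clear_value E E' f
    have hEnn : ∀ s, 0 ≤ E s := fun s => by
      simp only [hE_def]
      exact add_nonneg (mul_self_nonneg _) (mul_self_nonneg _)
    have hEpos : ∀ s, 0 < E s + 1 := fun s =>
      add_pos_of_nonneg_of_pos (hEnn s) one_pos
    have hEder : ∀ s ∈ Icc a b, s ≠ p → HasDerivAt E (E' s) s := by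
      intro s hs hsp
      simp only [hE_def, hE'_def]
      have h1 := (hderiv m s hs hsp).mul (hderiv m s hs hsp)
      have h2 := (hode m s hs hsp).mul (hode m s hs hsp)
      refine (h1.add h2).congr_deriv ?_
      ring
    have hfder : ∀ s ∈ Icc a b, s ≠ p → HasDerivAt f (E' s / (E s + 1)) s := by
      intro s hs hsp
      simp only [hf_def]
      exact ((hEder s hs hsp).add_const 1).log (ne_of_gt (hEpos s))
    have hE'le : ∀ s, |E' s| ≤ φ s * (E s + 1) := by
      intro s
      have h1 : E' s = 2 * u m s * u' m s * (1 + V s - m) := by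
        simp only [hE'_def]; ring
      rw [h1, abs_mul]
      have h2 : |2 * u m s * u' m s| ≤ E s := by
        simp only [hE_def]
        rw [abs_mul, abs_mul, abs_two]
        nlinarith [abs_mul_abs_self (u m s), abs_mul_abs_self (u' m s),
          mul_self_nonneg (|u m s| - |u' m s|), abs_nonneg (u m s), abs_nonneg (u' m s)]
      have h3 : |1 + V s - m| ≤ φ s := by
        have e1 : |1 + V s - m| ≤ |1 + V s| + |m| := by
          rw [sub_eq_add_neg]
          exact (abs_add_le _ _).trans (by rw [abs_neg])
        have e2 : |1 + V s| ≤ 1 + |V s| := (abs_add_le 1 (V s)).trans (by simp)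
        simp only [hφ]; linarith
      calc |2 * u m s * u' m s| * |1 + V s - m|
          ≤ E s * φ s := mul_le_mul h2 h3 (abs_nonneg _) (hEnn s)
        _ ≤ φ s * (E s + 1) := by nlinarith [hφnn s, hEnn s]
    -- interval integrability of the logarithmic derivative on intervals avoiding `p`
    have hintf' : ∀ c d : ℝ, c ≤ d → Ioc c d ⊆ Icc a b → (p ∉ Ioc c d) →
        IntervalIntegrable (fun s => E' s / (E s + 1)) volume c d := by
      intro c d hcd hsub hpnot
      have hIeq : Set.uIoc c d = Ioc c d := uIoc_of_le hcd
      have hsm : AEStronglyMeasurable (fun s => E' s / (E s + 1))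
          (volume.restrict (Ioc c d)) := by
        have hVm : AEStronglyMeasurable V (volume.restrict (Ioc c d)) :=
          hV.aestronglyMeasurable.mono_measure (Measure.restrict_mono hsub le_rfl)
        have hum : AEStronglyMeasurable (u m) (volume.restrict (Ioc c d)) := by
          exact (huconton m _ hsub).aestronglyMeasurable measurableSet_Ioc
        have hu'm : AEStronglyMeasurable (u' m) (volume.restrict (Ioc c d)) := by
          apply ContinuousOn.aestronglyMeasurable _ measurableSet_Ioc
          intro s hs
          exact (hu'cont m s (hsub hs) (fun h => hpnot (h ▸ hs))).continuousWithinAt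
        have h1 : AEMeasurable E' (volume.restrict (Ioc c d)) := by
          simp only [hE'_def]
          exact ((aemeasurable_const.mul hum.aemeasurable).mul hu'm.aemeasurable).add
            ((aemeasurable_const.mul hu'm.aemeasurable).mul
              ((hVm.aemeasurable.mul hum.aemeasurable).sub
                (aemeasurable_const.mul hum.aemeasurable)))
        have h2 : AEMeasurable (fun s => E s + 1) (volume.restrict (Ioc c d)) := by
          simp only [hE_def]
          exact ((hum.aemeasurable.mul hum.aemeasurable).add
            (hu'm.aemeasurable.mul hu'm.aemeasurable)).add aemeasurable_const
        exact (h1.div h2).aestronglyMeasurable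
      rw [intervalIntegrable_iff, hIeq]
      apply Integrable.mono' (hφint0.mono_set hsub) hsm
      apply ae_of_all
      intro s
      rw [Real.norm_eq_abs, abs_div, abs_of_pos (hEpos s), div_le_iff₀ (hEpos s)]
      exact hE'le s
    -- left piece: energy bound on [a, p)
    have hEa : E a = 1 := by
      simp only [hE_def, (hic m).1, (hic m).2]
      nlinarith [Real.sin_sq_add_cos_sq θ]
    have hfa : f a = Real.log 2 := by
      simp only [hf_def, hEa]; norm_num
    have hleft : ∀ c, a ≤ c → c < p → E c + 1 ≤ K := by
      intro c hac hcp
      have hcb : c ∈ Icc a b := ⟨hac, le_trans (le_of_lt hcp) (le_of_lt hpb)⟩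
      have hIsub : Ioc a c ⊆ Icc a b := fun s hs => ⟨le_of_lt hs.1, le_trans hs.2 hcb.2⟩
      have hpnot : p ∉ Ioc a c := fun h => absurd hcp (not_lt.2 h.2)
      have hintac := hintf' a c hac hIsub hpnot
      have heq : ∫ s in a..c, E' s / (E s + 1) = f c - f a := by
        apply intervalIntegral.integral_eq_sub_of_hasDerivAt_of_le hac
        · intro s hs
          exact (hfder s ⟨hs.1, le_trans hs.2 hcb.2⟩
            (ne_of_lt (lt_of_le_of_lt hs.2 hcp))).continuousAt.continuousWithinAt
        · intro s hs
          exact hfder s ⟨le_of_lt hs.1, le_trans (le_of_lt hs.2) hcb.2⟩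
            (ne_of_lt (lt_trans hs.2 hcp))
        · exact hintac
      have hle : ∫ s in a..c, E' s / (E s + 1) ≤ ∫ s in a..c, φ s := by
        apply intervalIntegral.integral_mono_on hac hintac (hφint a c hamem hcb)
        intro s hs
        rw [div_le_iff₀ (hEpos s)]
        calc E' s ≤ |E' s| := le_abs_self _
          _ ≤ φ s * (E s + 1) := hE'le s
      have h5 := hmono a c hamem hcb hac
      have h6 : f c ≤ Real.log 2 + B := by rw [← hfa]; linarith
      have h7 : Real.log 2 + B = Real.log K := by
        rw [hKdef, Real.log_mul two_ne_zero (Real.exp_ne_zero B), Real.log_exp]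
      rw [h7] at h6
      simp only [hf_def] at h6
      exact (Real.log_le_log_iff (hEpos c) hKpos).mp h6
    -- limit of the energy from the left at p
    obtain ⟨dm, hdm, hdm2⟩ := hjump m
    have hump : u m p * u m p + dm * dm + 1 ≤ K := by
      have htend : Tendsto (fun c => E c + 1) (𝓝[<] p)
          (𝓝 (u m p * u m p + dm * dm + 1)) := by
        simp only [hE_def]
        exact ((((hcontL m).mul (hcontL m)).add (hdm.mul hdm)).add tendsto_const_nhds)
      apply le_of_tendsto htend
      filter_upwards [Ioo_mem_nhdsLT_of_mem (⟨hap, le_refl p⟩ : p ∈ Ioc a p)] with c hc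
      exact hleft c (le_of_lt hc.1) hc.2
    have hexpB1 : 1 ≤ Real.exp B := by
      have := Real.exp_le_exp.mpr hBnn
      rwa [Real.exp_zero] at this
    have hEp : E p + 1 ≤ K1 := by
      have h1 : u' m p = dm + α * u m p := by linarith [hdm2]
      have hu2 : u m p * u m p ≤ K := by nlinarith [mul_self_nonneg dm]
      have hd2 : dm * dm ≤ K := by nlinarith [mul_self_nonneg (u m p)]
      have ha2 : α * α * (u m p * u m p) ≤ α * α * K :=
        mul_le_mul_of_nonneg_left hu2 (mul_self_nonneg α)
      simp only [hE_def, hK1def, h1]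
      nlinarith [mul_self_nonneg (dm - α * u m p)]
    -- energy bound to the right of p
    have hpmem : p ∈ Icc a b := ⟨le_of_lt hap, le_of_lt hpb⟩
    have hright : ∀ s, p ≤ s → s ≤ b → E s + 1 ≤ K1 * Real.exp B := by
      intro s hps hsb
      have hsmem : s ∈ Icc a b := ⟨le_trans (le_of_lt hap) hps, hsb⟩
      have hIsub : Ioc p s ⊆ Icc a b := fun r hr =>
        ⟨le_trans (le_of_lt hap) (le_of_lt hr.1), le_trans hr.2 hsb⟩
      have hpnot : p ∉ Ioc p s := fun h => lt_irrefl p h.1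
      have hint := hintf' p s hps hIsub hpnot
      have hcontf : ContinuousOn f (Icc p s) := by
        simp only [hf_def]
        apply ContinuousOn.log
        · apply ContinuousOn.add _ continuousOn_const
          simp only [hE_def]
          have hus : ContinuousOn (u m) (Icc p s) :=
            huconton m _ (Icc_subset_Icc hpmem.1 hsb)
          have hu's : ContinuousOn (u' m) (Icc p s) :=
            (hu'contR m).mono (Icc_subset_Icc le_rfl hsb)
          exact (hus.mul hus).add (hu's.mul hu's)
        · intro r _; exact ne_of_gt (hEpos r)
      have heq : ∫ r in p..s, E' r / (E r + 1) = f s - f p :=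
        intervalIntegral.integral_eq_sub_of_hasDeriv_right_of_le hps hcontf
          (fun r hr => (hfder r (hIsub ⟨hr.1, le_of_lt hr.2⟩)
            (ne_of_gt hr.1)).hasDerivWithinAt) hint
      have hle : ∫ r in p..s, E' r / (E r + 1) ≤ ∫ r in p..s, φ r := by
        apply intervalIntegral.integral_mono_on hps hint (hφint p s hpmem hsmem)
        intro r _
        rw [div_le_iff₀ (hEpos r)]
        calc E' r ≤ |E' r| := le_abs_self _
          _ ≤ φ r * (E r + 1) := hE'le r
      have h5 := hmono p s hpmem hsmem hps
      have h6 : f s ≤ f p + B := by linarith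
      have h7 : f p ≤ Real.log K1 := by
        simp only [hf_def]
        exact (Real.log_le_log_iff (hEpos p) hK1pos).mpr hEp
      have h8 : f s ≤ Real.log (K1 * Real.exp B) := by
        rw [Real.log_mul (ne_of_gt hK1pos) (Real.exp_ne_zero B), Real.log_exp]
        linarith
      simp only [hf_def] at h8
      exact (Real.log_le_log_iff (hEpos s) (by positivity)).mp h8
    -- put the three regimes together
    have hKleK1 : K ≤ K1 * Real.exp B := by
      nlinarith [mul_self_nonneg α]
    have hK1le : K1 ≤ K1 * Real.exp B := by nlinarith
    have hsq : u m t * u m t ≤ K1 * Real.exp B := by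
      rcases lt_trichotomy t p with htp | rfl | htp
      · have := hleft t ht.1 htp
        have hE_le : E t + 1 ≤ K := this
        simp only [hE_def] at hE_le
        nlinarith [mul_self_nonneg (u' m t)]
      · have hE_le := hEp
        simp only [hE_def] at hE_le
        nlinarith [mul_self_nonneg (u' m t)]
      · have hE_le := hright t (le_of_lt htp) ht.2
        simp only [hE_def] at hE_le
        nlinarith [mul_self_nonneg (u' m t)]
    calc |u m t| = Real.sqrt (|u m t| * |u m t|) :=
          (Real.sqrt_mul_self (abs_nonneg _)).symm
      _ ≤ Real.sqrt (K1 * Real.exp B) := by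
          apply Real.sqrt_le_sqrt
          rw [abs_mul_abs_self]
          exact hsq
  -- ## Limit of the integrals
  have hlimG : Tendsto (fun m => ∫ t in a..x, u lam t * u m t) (𝓝 lam)
      (𝓝 (∫ t in a..x, (u lam t) ^ 2)) := by
    obtain ⟨C, hC⟩ := hbound
    have hIsub : Set.uIoc a x ⊆ Icc a b := by
      rw [uIoc_of_le hax]
      exact fun t ht => ⟨le_of_lt ht.1, le_trans ht.2 hxb⟩
    have hrw : (∫ t in a..x, (u lam t) ^ 2) = ∫ t in a..x, u lam t * u lam t := by
      congr 1; ext t; ring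
    rw [hrw]
    apply intervalIntegral.tendsto_integral_filter_of_dominated_convergence
      (bound := fun t => |u lam t| * C)
    · filter_upwards with m
      exact (((huconton lam _ hIsub).mul (huconton m _ hIsub)).aestronglyMeasurable
        measurableSet_uIoc)
    · filter_upwards [Icc_mem_nhds (by linarith : lam - 1 < lam)
        (by linarith : lam < lam + 1)] with m hm
      apply ae_of_all
      intro t ht
      rw [Real.norm_eq_abs, abs_mul]
      exact mul_le_mul_of_nonneg_left (hC m hm t (hIsub ht)) (abs_nonneg _)
    · apply ContinuousOn.intervalIntegrable
      apply ContinuousOn.mul _ continuousOn_const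
      apply ContinuousOn.abs
      apply huconton lam
      rw [uIcc_of_le hax]
      exact Icc_subset_Icc le_rfl hxb
    · apply ae_of_all
      intro t ht
      exact Filter.Tendsto.const_mul (u lam t) ((hentire t).1.continuous.continuousAt)
  -- ## Differentiation step
  set A := deriv (fun l => u l x) lam with hA_def
  set B := deriv (fun l => u' l x) lam with hB_def
  have hA : HasDerivAt (fun l => u l x) A lam := ((hentire x).1 lam).hasDerivAt
  have hB : HasDerivAt (fun l => u' l x) B lam := ((hentire x).2 lam).hasDerivAt
  have key : u' lam x * A - u lam x * B = ∫ t in a..x, (u lam t) ^ 2 := by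
    have hF : HasDerivAt (fun m => u lam x * u' m x - u' lam x * u m x)
        (u lam x * B - u' lam x * A) lam := ((hB.const_mul _).sub (hA.const_mul _))
    rw [hasDerivAt_iff_tendsto_slope] at hF
    have hslope : ∀ m : ℝ, m ≠ lam →
        slope (fun m => u lam x * u' m x - u' lam x * u m x) lam m
          = -(∫ t in a..x, u lam t * u m t) := by
      intro m hm
      have h1 := lagrange lam m
      have h2 : u lam x * u' lam x - u' lam x * u lam x = 0 := by ring
      rw [slope_def_field, div_eq_iff (sub_ne_zero.2 hm)]
      rw [h2, ← h1]; ring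
    have h3 : Tendsto (fun m => -(∫ t in a..x, u lam t * u m t)) (𝓝[≠] lam)
        (𝓝 (u lam x * B - u' lam x * A)) := by
      refine hF.congr' ?_
      filter_upwards [self_mem_nhdsWithin] with m hm
      exact hslope m hm
    have h4 : Tendsto (fun m => -(∫ t in a..x, u lam t * u m t)) (𝓝[≠] lam)
        (𝓝 (-(∫ t in a..x, (u lam t) ^ 2))) :=
      (hlimG.neg).mono_left nhdsWithin_le_nhds
    have := tendsto_nhds_unique h3 h4
    linarith [this]
  have hq : HasDerivAt (fun l => u l x / u' l x)
      ((A * u' lam x - u lam x * B) / (u' lam x) ^ 2) lam := hA.div hB h0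
  rw [hq.deriv, ← key]
  field_simp
end

section
/- Under the same hypotheses, for any x ∈ [a,b] \ {p} with u_{a,α}(λ,x) ≠ 0, ∂/∂λ [ u_{a,α}'(λ,x) / u_{a,α}(λ,x) ] = -(1 / u_{a,α}(λ,x)²) ∫_a^x u_{a,α}(λ,t)² dt. -/
open Filter Topology Set MeasureTheory

private lemma cwa_left {f : ℝ → ℝ} {p c : ℝ} (h : Tendsto f (𝓝[<] p) (𝓝 c))
    (hval : f p = c) : ContinuousWithinAt f (Iic p) p := by
  have hIic : Iic p = Iio p ∪ {p} := Iio_union_right.symm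
  unfold ContinuousWithinAt
  rw [hval, hIic, nhdsWithin_union]
  refine h.sup ?_
  rw [nhdsWithin_singleton]
  exact hval ▸ tendsto_pure_nhds f p

private lemma cwa_right {f : ℝ → ℝ} {p c : ℝ} (h : Tendsto f (𝓝[>] p) (𝓝 c))
    (hval : f p = c) : ContinuousWithinAt f (Ici p) p := by
  have hIci : Ici p = Ioi p ∪ {p} := Ioi_union_left.symm
  unfold ContinuousWithinAt
  rw [hval, hIci, nhdsWithin_union]
  refine h.sup ?_
  rw [nhdsWithin_singleton]
  exact hval ▸ tendsto_pure_nhds f p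

private lemma ca_of_lr {f : ℝ → ℝ} {p : ℝ} (hl : Tendsto f (𝓝[<] p) (𝓝 (f p)))
    (hr : Tendsto f (𝓝[>] p) (𝓝 (f p))) : ContinuousAt f p := by
  have h := (cwa_left hl rfl).union (cwa_right hr rfl)
  rwa [Iic_union_Ici, continuousWithinAt_univ] at h

private lemma sup_bound (k φ : ℝ → ℝ) (A B : ℝ) (hAB : A ≤ B)
    (hφ : ContinuousOn φ (Icc A B)) (hφ0 : ∀ t ∈ Icc A B, 0 ≤ φ t)
    (hk : IntegrableOn k (Icc A B)) (hk0 : ∀ t ∈ Icc A B, 0 ≤ k t)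
    (hksmall : (∫ s in A..B, k s) ≤ 1/2)
    (hineq : ∀ r, A ≤ r → r ≤ B → φ r ≤ φ A + ∫ s in A..r, k s * φ s) :
    ∀ t ∈ Icc A B, φ t ≤ 2 * φ A := by
  obtain ⟨r₀, hr₀, hmax⟩ := isCompact_Icc.exists_isMaxOn (nonempty_Icc.2 hAB) hφ
  have hsub : Icc A r₀ ⊆ Icc A B := Icc_subset_Icc le_rfl hr₀.2
  have hkr : IntervalIntegrable k volume A r₀ := by
    rw [intervalIntegrable_iff_integrableOn_Icc_of_le hr₀.1]
    exact hk.mono_set hsub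
  have hkφ : IntervalIntegrable (fun s => k s * φ s) volume A r₀ := by
    rw [intervalIntegrable_iff_integrableOn_Icc_of_le hr₀.1]
    exact (hk.mono_set hsub).mul_continuousOn (hφ.mono hsub) isCompact_Icc
  have hkc : IntervalIntegrable (fun s => k s * φ r₀) volume A r₀ := hkr.mul_const _
  have h2 : (∫ s in A..r₀, k s * φ s) ≤ ∫ s in A..r₀, k s * φ r₀ := by
    apply intervalIntegral.integral_mono_on hr₀.1 hkφ hkc
    intro s hs
    exact mul_le_mul_of_nonneg_left (hmax (hsub hs)) (hk0 s (hsub hs))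
  have h3 : (∫ s in A..r₀, k s * φ r₀) = (∫ s in A..r₀, k s) * φ r₀ :=
    intervalIntegral.integral_mul_const _ _
  have h4 : (∫ s in A..r₀, k s) ≤ 1/2 := by
    have hkr' : IntervalIntegrable k volume r₀ B := by
      rw [intervalIntegrable_iff_integrableOn_Icc_of_le hr₀.2]
      exact hk.mono_set (Icc_subset_Icc hr₀.1 le_rfl)
    have hadd := intervalIntegral.integral_add_adjacent_intervals hkr hkr'
    have hpos : 0 ≤ ∫ s in r₀..B, k s := by
      apply intervalIntegral.integral_nonneg hr₀.2
      intro s hs; exact hk0 s ⟨le_trans hr₀.1 hs.1, hs.2⟩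
    linarith
  have h5 := hineq r₀ hr₀.1 hr₀.2
  have h6 : 0 ≤ φ r₀ := hφ0 r₀ hr₀
  have h7 : φ r₀ ≤ 2 * φ A := by nlinarith
  intro t ht
  exact le_trans (hmax ht) h7

private lemma chain_bound (k φ : ℝ → ℝ) (B : ℝ) :
    ∀ (n : ℕ) (A : ℝ), A ≤ B →
    ContinuousOn φ (Icc A B) → (∀ t ∈ Icc A B, 0 ≤ φ t) →
    IntegrableOn k (Icc A B) volume → (∀ t ∈ Icc A B, 1 ≤ k t) →
    (∀ c r, A ≤ c → c ≤ r → r ≤ B → φ r ≤ φ c + ∫ s in c..r, k s * φ s) →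
    (∫ s in A..B, k s) ≤ n / 2 → ∀ t ∈ Icc A B, φ t ≤ 2 ^ n * φ A := by
  intro n
  induction n with
  | zero =>
    intro A hAB hφ hφ0 hk hk1 hineq hsmall t ht
    have hki : IntervalIntegrable k volume A B := by
      rw [intervalIntegrable_iff_integrableOn_Icc_of_le hAB]; exact hk
    have h1 : B - A ≤ ∫ s in A..B, k s := by
      have := intervalIntegral.integral_mono_on hAB intervalIntegrable_const hki
        (fun s hs => hk1 s hs)
      simpa using this
    have hBA : B = A := le_antisymm (by push_cast at hsmall; linarith) hAB
    have : t = A := le_antisymm (hBA ▸ ht.2) ht.1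
    simp [this]
  | succ n ih =>
    intro A hAB hφ hφ0 hk hk1 hineq hsmall
    have hone : (1:ℝ) ≤ 2 ^ n := one_le_pow₀ (by norm_num)
    have hk0 : ∀ t ∈ Icc A B, 0 ≤ k t := fun t ht => le_trans zero_le_one (hk1 t ht)
    by_cases hK : (∫ s in A..B, k s) ≤ 1/2
    · intro t ht
      have := sup_bound k φ A B hAB hφ hφ0 hk hk0 hK
        (fun r h1 h2 => hineq A r le_rfl h1 h2) t ht
      have hφA := hφ0 A ⟨le_rfl, hAB⟩
      calc φ t ≤ 2 * φ A := this
        _ ≤ 2 ^ (n+1) * φ A := by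
            rw [pow_succ]; nlinarith
    · push_neg at hK
      set F : ℝ → ℝ := fun t => ∫ s in A..t, k s with hF
      have hFcont : ContinuousOn F (Icc A B) := by
        have := intervalIntegral.continuousOn_primitive_interval
          (f := k) (μ := volume) (a := A) (b := B) (by rwa [uIcc_of_le hAB])
        rwa [uIcc_of_le hAB] at this
      have hmem : (1/2 : ℝ) ∈ Icc (F A) (F B) := by
        constructor
        · simp [hF]
        · exact le_of_lt hK
      obtain ⟨m, hm, hFm⟩ := intermediate_value_Icc hAB hFcont hmem
      have hsubL : Icc A m ⊆ Icc A B := Icc_subset_Icc le_rfl hm.2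
      have hsubR : Icc m B ⊆ Icc A B := Icc_subset_Icc hm.1 le_rfl
      have hL : ∀ t ∈ Icc A m, φ t ≤ 2 * φ A := by
        apply sup_bound k φ A m hm.1 (hφ.mono hsubL) (fun t ht => hφ0 t (hsubL ht))
          (hk.mono_set hsubL) (fun t ht => hk0 t (hsubL ht))
        · simp only [hF] at hFm; rw [hFm]
        · exact fun r h1 h2 => hineq A r le_rfl h1 (le_trans h2 hm.2)
      have hkiL : IntervalIntegrable k volume A m := by
        rw [intervalIntegrable_iff_integrableOn_Icc_of_le hm.1]; exact hk.mono_set hsubL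
      have hkiR : IntervalIntegrable k volume m B := by
        rw [intervalIntegrable_iff_integrableOn_Icc_of_le hm.2]; exact hk.mono_set hsubR
      have hsmall' : (∫ s in m..B, k s) ≤ n / 2 := by
        have hadd := intervalIntegral.integral_add_adjacent_intervals hkiL hkiR
        simp only [hF] at hFm
        push_cast at hsmall ⊢
        linarith
      have hR := ih m hm.2 (hφ.mono hsubR) (fun t ht => hφ0 t (hsubR ht))
        (hk.mono_set hsubR) (fun t ht => hk1 t (hsubR ht))
        (fun c r h1 h2 h3 => hineq c r (le_trans hm.1 h1) h2 h3) hsmall'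
      intro t ht
      have hφA := hφ0 A ⟨le_rfl, hAB⟩
      rcases le_total t m with h | h
      · calc φ t ≤ 2 * φ A := hL t ⟨ht.1, h⟩
          _ ≤ 2 ^ (n+1) * φ A := by rw [pow_succ]; nlinarith
      · have h1 : φ t ≤ 2 ^ n * φ m := hR t ⟨h, ht.2⟩
        have h2 : φ m ≤ 2 * φ A := hL m ⟨hm.1, le_rfl⟩
        have h3 : (0:ℝ) ≤ 2 ^ n := by positivity
        calc φ t ≤ 2 ^ n * φ m := h1
          _ ≤ 2 ^ n * (2 * φ A) := mul_le_mul_of_nonneg_left h2 h3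
          _ = 2 ^ (n+1) * φ A := by ring

set_option maxHeartbeats 2000000 in
/-- **Atkinson-type identity for the λ-derivative of `u/u'`.**
Let `u α λ x = u_{a,α}(λ,x)` be the solution of `-u'' + V u = λ u` on `[a,b]` with a
δ-interaction of strength `α` at `p`, normalized by `u(λ,a) = sin θ`, `u'(λ,a) = -cos θ`,
depending differentiably (entirely) on `λ`.  Then for `x ∈ [a,b] \ {p}` with
`u(λ,x) ≠ 0`,
`∂/∂λ [u'(λ,x)/u(λ,x)] = -(1/u(λ,x)²) ∫_a^x u(λ,t)² dt`. -/
theorem atkinson_lambda_derivative_quot_inv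
    (V : ℝ → ℝ) (a b p α θ : ℝ) (hab : a < b) (hp : p ∈ Ioo a b)
    (hθ : θ ∈ Ico 0 Real.pi) (hV : IntegrableOn V (Icc a b))
    (u u' : ℝ → ℝ → ℝ)  -- u lam t, u' lam t
    -- for each λ, a solution with δ-interaction of strength α at p
    (hderiv : ∀ lam : ℝ, ∀ t ∈ Icc a b, t ≠ p → HasDerivAt (u lam) (u' lam t) t)
    (hode : ∀ lam : ℝ, ∀ t ∈ Icc a b, t ≠ p →
      HasDerivAt (u' lam) (V t * u lam t - lam * u lam t) t)
    (hcontR : ∀ lam : ℝ, Tendsto (u lam) (𝓝[>] p) (𝓝 (u lam p)))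
    (hcontL : ∀ lam : ℝ, Tendsto (u lam) (𝓝[<] p) (𝓝 (u lam p)))
    (hderR : ∀ lam : ℝ, Tendsto (u' lam) (𝓝[>] p) (𝓝 (u' lam p)))
    (hjump : ∀ lam : ℝ, ∃ dm, Tendsto (u' lam) (𝓝[<] p) (𝓝 dm) ∧
      u' lam p - dm = α * u lam p)
    -- boundary normalization at a
    (hic : ∀ lam : ℝ, u lam a = Real.sin θ ∧ u' lam a = -Real.cos θ)
    -- entire dependence on λ for each fixed x
    (hentire : ∀ t : ℝ, Differentiable ℝ (fun l => u l t) ∧ Differentiable ℝ (fun l => u' l t))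
    (lam x : ℝ) (hx : x ∈ Icc a b) (hxp : x ≠ p) (h0 : u lam x ≠ 0) :
    deriv (fun l => u' l x / u l x) lam
      = -(1 / (u lam x) ^ 2) * ∫ t in a..x, (u lam t) ^ 2 := by
  obtain ⟨hap, hpb⟩ := hp
  obtain ⟨hax, hxb⟩ := hx
  have hpab : p ∈ Icc a b := ⟨le_of_lt hap, le_of_lt hpb⟩
  choose dm hdmL hdmJ using hjump
  -- continuity of u l on [a,b]
  have huCA : ∀ l, ∀ t ∈ Icc a b, ContinuousAt (u l) t := by
    intro l t ht
    rcases eq_or_ne t p with rfl | htp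
    · exact ca_of_lr (hcontL l) (hcontR l)
    · exact (hderiv l t ht htp).continuousAt
  have huC : ∀ l, ContinuousOn (u l) (Icc a b) :=
    fun l t ht => (huCA l t ht).continuousWithinAt
  have hu'CA : ∀ l, ∀ t ∈ Icc a b, t ≠ p → ContinuousAt (u' l) t :=
    fun l t ht htp => (hode l t ht htp).continuousAt
  -- the modified left-derivative function
  set v : ℝ → ℝ → ℝ := fun l t => if t = p then dm l else u' l t with hv
  have hveq : ∀ l t, t ≠ p → v l t = u' l t := by
    intro l t ht; simp only [hv, if_neg ht]
  have hvev : ∀ (l : ℝ) (t : ℝ), t ≠ p → v l =ᶠ[𝓝 t] u' l := by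
    intro l t ht
    filter_upwards [isOpen_compl_singleton.mem_nhds ht] with s hs
    exact hveq l s hs
  have hvL : ∀ l, Tendsto (v l) (𝓝[<] p) (𝓝 (dm l)) := by
    intro l
    refine (hdmL l).congr' ?_
    filter_upwards [self_mem_nhdsWithin] with s hs
    exact (hveq l s (ne_of_lt hs)).symm
  have hvC : ∀ l, ContinuousOn (v l) (Icc a p) := by
    intro l t ht
    rcases eq_or_lt_of_le ht.2 with rfl | htp
    · exact (cwa_left (hvL l) (by simp [hv])).mono Icc_subset_Iic_self
    · exact ((hu'CA l t ⟨ht.1, le_trans ht.2 (le_of_lt hpb)⟩ (ne_of_lt htp)).congr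
        (hvev l t (ne_of_lt htp)).symm).continuousWithinAt
  have hu'CR : ∀ l, ContinuousOn (u' l) (Icc p b) := by
    intro l t ht
    rcases eq_or_lt_of_le ht.1 with rfl | htp
    · exact (cwa_right (hderR l) rfl).mono Icc_subset_Ici_self
    · exact (hu'CA l t ⟨le_trans (le_of_lt hap) ht.1, ht.2⟩ (ne_of_gt htp)).continuousWithinAt
  -- generic FTC helper
  have ftc : ∀ (f f' : ℝ → ℝ) (c d : ℝ), c ≤ d →
      ContinuousOn f (Icc c d) → (∀ t ∈ Ioo c d, HasDerivAt f (f' t) t) →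
      IntervalIntegrable f' volume c d →
      ∫ t in c..d, f' t = f d - f c := by
    intro f f' c d hcd hcont hd hint
    apply intervalIntegral.integral_eq_sub_of_hasDeriv_right
    · rwa [uIcc_of_le hcd]
    · rw [min_eq_left hcd, max_eq_right hcd]
      exact fun t ht => (hd t ht).hasDerivWithinAt
    · exact hint
  -- integrability of (V - l) * u on subintervals of [a,b]
  have hVu : ∀ (l : ℝ) (c d : ℝ), a ≤ c → c ≤ d → d ≤ b →
      IntervalIntegrable (fun s => (V s - l) * u l s) volume c d := by
    intro l c d h1 h2 h3
    have h4 : IntegrableOn (fun s => (V s - l) * u l s) (Icc a b) := by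
      have h5 : IntegrableOn (fun s => V s - l) (Icc a b) :=
        hV.sub (integrableOn_const measure_Icc_lt_top.ne)
      exact h5.mul_continuousOn (huC l) isCompact_Icc
    rw [intervalIntegrable_iff_integrableOn_Icc_of_le h2]
    exact h4.mono_set (Icc_subset_Icc h1 h3)
  -- FTC identities on the two sides
  have ftcuL : ∀ (l : ℝ) (c d : ℝ), a ≤ c → c ≤ d → d ≤ p →
      u l d = u l c + ∫ t in c..d, v l t := by
    intro l c d h1 h2 h3
    have hsub : Icc c d ⊆ Icc a p := Icc_subset_Icc h1 h3
    have := ftc (u l) (v l) c d h2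
      ((huC l).mono (hsub.trans (Icc_subset_Icc le_rfl (le_of_lt hpb))))
      (fun t ht => by
        have htp : t ≠ p := ne_of_lt (lt_of_lt_of_le ht.2 h3)
        rw [hveq l t htp]
        exact hderiv l t ⟨le_trans h1 (le_of_lt ht.1), le_trans (le_of_lt ht.2)
          (le_trans h3 (le_of_lt hpb))⟩ htp)
      (((hvC l).mono (by rw [uIcc_of_le h2]; exact hsub : uIcc c d ⊆ Icc a p)).intervalIntegrable)
    linarith
  have ftcvL : ∀ (l : ℝ) (c d : ℝ), a ≤ c → c ≤ d → d ≤ p →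
      v l d = v l c + ∫ t in c..d, (V t - l) * u l t := by
    intro l c d h1 h2 h3
    have hsub : Icc c d ⊆ Icc a p := Icc_subset_Icc h1 h3
    have := ftc (v l) (fun t => (V t - l) * u l t) c d h2 ((hvC l).mono hsub)
      (fun t ht => by
        have htp : t ≠ p := ne_of_lt (lt_of_lt_of_le ht.2 h3)
        have hd := hode l t ⟨le_trans h1 (le_of_lt ht.1), le_trans (le_of_lt ht.2)
          (le_trans h3 (le_of_lt hpb))⟩ htp
        have : HasDerivAt (v l) (V t * u l t - l * u l t) t :=
          hd.congr_of_eventuallyEq (hvev l t htp)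
        convert this using 1; ring)
      (hVu l c d h1 h2 (le_trans h3 (le_of_lt hpb)))
    linarith
  have ftcuR : ∀ (l : ℝ) (c d : ℝ), p ≤ c → c ≤ d → d ≤ b →
      u l d = u l c + ∫ t in c..d, u' l t := by
    intro l c d h1 h2 h3
    have hsub : Icc c d ⊆ Icc p b := Icc_subset_Icc h1 h3
    have := ftc (u l) (u' l) c d h2
      ((huC l).mono (hsub.trans (Icc_subset_Icc (le_of_lt hap) le_rfl)))
      (fun t ht => hderiv l t ⟨le_trans (le_of_lt hap) (le_trans h1 (le_of_lt ht.1)),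
          le_trans (le_of_lt ht.2) h3⟩ (ne_of_gt (lt_of_le_of_lt h1 ht.1)))
      (((hu'CR l).mono (by rw [uIcc_of_le h2]; exact hsub : uIcc c d ⊆ Icc p b)).intervalIntegrable)
    linarith
  have ftcvR : ∀ (l : ℝ) (c d : ℝ), p ≤ c → c ≤ d → d ≤ b →
      u' l d = u' l c + ∫ t in c..d, (V t - l) * u l t := by
    intro l c d h1 h2 h3
    have hsub : Icc c d ⊆ Icc p b := Icc_subset_Icc h1 h3
    have := ftc (u' l) (fun t => (V t - l) * u l t) c d h2 ((hu'CR l).mono hsub)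
      (fun t ht => by
        have hd := hode l t ⟨le_trans (le_of_lt hap) (le_trans h1 (le_of_lt ht.1)),
          le_trans (le_of_lt ht.2) h3⟩ (ne_of_gt (lt_of_le_of_lt h1 ht.1))
        convert hd using 1; ring)
      (hVu l c d (le_trans (le_of_lt hap) h1) h2 h3)
    linarith
  -- the integrable Gronwall coefficient
  set Λ : ℝ := |lam| + 1 with hΛ
  set k : ℝ → ℝ := fun s => |V s| + (Λ + 1) with hkdef
  have hkint : IntegrableOn k (Icc a b) :=
    hV.abs.add (integrableOn_const measure_Icc_lt_top.ne)
  have hk1 : ∀ s, 1 ≤ k s := by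
    intro s
    have h1 := abs_nonneg (V s); have h2 := abs_nonneg lam
    simp only [hkdef, hΛ]; linarith
  have hk0 : ∀ s, 0 ≤ k s := fun s => le_trans zero_le_one (hk1 s)
  have hkVl : ∀ (l : ℝ), |l - lam| ≤ 1 → ∀ s, |V s - l| ≤ k s := by
    intro l hl s
    have h1 : |V s - l| ≤ |V s| + |l| := abs_sub _ _
    have h2 : |l| ≤ |lam| + 1 := by
      calc |l| = |lam + (l - lam)| := by ring_nf
        _ ≤ |lam| + |l - lam| := abs_add_le _ _
        _ ≤ |lam| + 1 := by linarith
    simp only [hkdef, hΛ]; linarith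
  -- choose n with ∫ k ≤ n/2 over both halves
  obtain ⟨n, hn⟩ : ∃ n : ℕ, (∫ s in a..b, k s) ≤ n / 2 := by
    refine ⟨⌈2 * ∫ s in a..b, k s⌉₊, ?_⟩
    have := Nat.le_ceil (2 * ∫ s in a..b, k s)
    linarith
  have hkiL : IntervalIntegrable k volume a p := by
    rw [intervalIntegrable_iff_integrableOn_Icc_of_le (le_of_lt hap)]
    exact hkint.mono_set (Icc_subset_Icc le_rfl (le_of_lt hpb))
  have hkiR : IntervalIntegrable k volume p b := by
    rw [intervalIntegrable_iff_integrableOn_Icc_of_le (le_of_lt hpb)]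
    exact hkint.mono_set (Icc_subset_Icc (le_of_lt hap) le_rfl)
  have hksplit := intervalIntegral.integral_add_adjacent_intervals hkiL hkiR
  have hknnL : 0 ≤ ∫ s in a..p, k s :=
    intervalIntegral.integral_nonneg (le_of_lt hap) (fun s _ => hk0 s)
  have hknnR : 0 ≤ ∫ s in p..b, k s :=
    intervalIntegral.integral_nonneg (le_of_lt hpb) (fun s _ => hk0 s)
  have hnL : (∫ s in a..p, k s) ≤ n / 2 := by linarith
  have hnR : (∫ s in p..b, k s) ≤ n / 2 := by linarith
  -- the integral inequality on the left of p
  have hineqL : ∀ (l : ℝ), |l - lam| ≤ 1 → ∀ c r, a ≤ c → c ≤ r → r ≤ p →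
      |u l r| + |v l r| ≤ (|u l c| + |v l c|) + ∫ s in c..r, k s * (|u l s| + |v l s|) := by
    intro l hl c r h1 h2 h3
    have hsub : Icc c r ⊆ Icc a p := Icc_subset_Icc h1 h3
    have hsubab : Icc c r ⊆ Icc a b := hsub.trans (Icc_subset_Icc le_rfl (le_of_lt hpb))
    have husub : uIcc c r ⊆ Icc a p := by rw [uIcc_of_le h2]; exact hsub
    have i1 : IntervalIntegrable (fun s => |v l s|) volume c r :=
      (((hvC l).mono husub).abs).intervalIntegrable
    have i2 : IntervalIntegrable (fun s => |V s - l| * |u l s|) volume c r := by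
      rw [intervalIntegrable_iff_integrableOn_Icc_of_le h2]
      have h5 : IntegrableOn (fun s => |V s - l|) (Icc a b) :=
        (hV.sub (integrableOn_const measure_Icc_lt_top.ne)).abs
      exact (h5.mul_continuousOn ((huC l).abs) isCompact_Icc).mono_set hsubab
    have i3 : IntervalIntegrable (fun s => k s * (|u l s| + |v l s|)) volume c r := by
      rw [intervalIntegrable_iff_integrableOn_Icc_of_le h2]
      refine (hkint.mono_set hsubab).mul_continuousOn ?_ isCompact_Icc
      exact (((huC l).mono hsubab).abs).add (((hvC l).mono hsub).abs)
    have e1 := ftcuL l c r h1 h2 h3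
    have e2 := ftcvL l c r h1 h2 h3
    have a1 : |u l r| ≤ |u l c| + ∫ s in c..r, |v l s| := by
      rw [e1]
      refine le_trans (abs_add_le _ _) ?_
      gcongr
      have := intervalIntegral.norm_integral_le_integral_norm (f := v l) (μ := volume) h2
      simpa [Real.norm_eq_abs] using this
    have a2 : |v l r| ≤ |v l c| + ∫ s in c..r, |V s - l| * |u l s| := by
      rw [e2]
      refine le_trans (abs_add_le _ _) ?_
      gcongr
      have := intervalIntegral.norm_integral_le_integral_norm
        (f := fun s => (V s - l) * u l s) (μ := volume) h2
      simpa [Real.norm_eq_abs, abs_mul] using this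
    have a3 : (∫ s in c..r, |v l s|) + (∫ s in c..r, |V s - l| * |u l s|)
        ≤ ∫ s in c..r, k s * (|u l s| + |v l s|) := by
      rw [← intervalIntegral.integral_add i1 i2]
      apply intervalIntegral.integral_mono_on h2 (i1.add i2) i3
      intro s hs
      have hb1 := hkVl l hl s
      have hb2 := hk1 s
      have hb3 := abs_nonneg (u l s); have hb4 := abs_nonneg (v l s)
      nlinarith [mul_nonneg (sub_nonneg.2 hb1) hb3, mul_nonneg (sub_nonneg.2 hb2) hb4]
    linarith
  -- the integral inequality on the right of p
  have hineqR : ∀ (l : ℝ), |l - lam| ≤ 1 → ∀ c r, p ≤ c → c ≤ r → r ≤ b →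
      |u l r| + |u' l r| ≤ (|u l c| + |u' l c|) + ∫ s in c..r, k s * (|u l s| + |u' l s|) := by
    intro l hl c r h1 h2 h3
    have hsub : Icc c r ⊆ Icc p b := Icc_subset_Icc h1 h3
    have hsubab : Icc c r ⊆ Icc a b := hsub.trans (Icc_subset_Icc (le_of_lt hap) le_rfl)
    have husub : uIcc c r ⊆ Icc p b := by rw [uIcc_of_le h2]; exact hsub
    have i1 : IntervalIntegrable (fun s => |u' l s|) volume c r :=
      (((hu'CR l).mono husub).abs).intervalIntegrable
    have i2 : IntervalIntegrable (fun s => |V s - l| * |u l s|) volume c r := by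
      rw [intervalIntegrable_iff_integrableOn_Icc_of_le h2]
      have h5 : IntegrableOn (fun s => |V s - l|) (Icc a b) :=
        (hV.sub (integrableOn_const measure_Icc_lt_top.ne)).abs
      exact (h5.mul_continuousOn ((huC l).abs) isCompact_Icc).mono_set hsubab
    have i3 : IntervalIntegrable (fun s => k s * (|u l s| + |u' l s|)) volume c r := by
      rw [intervalIntegrable_iff_integrableOn_Icc_of_le h2]
      refine (hkint.mono_set hsubab).mul_continuousOn ?_ isCompact_Icc
      exact (((huC l).mono hsubab).abs).add (((hu'CR l).mono hsub).abs)
    have e1 := ftcuR l c r h1 h2 h3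
    have e2 := ftcvR l c r h1 h2 h3
    have a1 : |u l r| ≤ |u l c| + ∫ s in c..r, |u' l s| := by
      rw [e1]
      refine le_trans (abs_add_le _ _) ?_
      gcongr
      have := intervalIntegral.norm_integral_le_integral_norm (f := u' l) (μ := volume) h2
      simpa [Real.norm_eq_abs] using this
    have a2 : |u' l r| ≤ |u' l c| + ∫ s in c..r, |V s - l| * |u l s| := by
      rw [e2]
      refine le_trans (abs_add_le _ _) ?_
      gcongr
      have := intervalIntegral.norm_integral_le_integral_norm
        (f := fun s => (V s - l) * u l s) (μ := volume) h2
      simpa [Real.norm_eq_abs, abs_mul] using this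
    have a3 : (∫ s in c..r, |u' l s|) + (∫ s in c..r, |V s - l| * |u l s|)
        ≤ ∫ s in c..r, k s * (|u l s| + |u' l s|) := by
      rw [← intervalIntegral.integral_add i1 i2]
      apply intervalIntegral.integral_mono_on h2 (i1.add i2) i3
      intro s hs
      have hb1 := hkVl l hl s
      have hb2 := hk1 s
      have hb3 := abs_nonneg (u l s); have hb4 := abs_nonneg (u' l s)
      nlinarith [mul_nonneg (sub_nonneg.2 hb1) hb3, mul_nonneg (sub_nonneg.2 hb2) hb4]
    linarith
  -- the uniform bound
  set M : ℝ := 2 ^ n * 2 + 2 ^ n * ((1 + |α|) * (2 ^ n * 2)) with hM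
  have hM0 : 0 ≤ M := by positivity
  have hbound : ∀ (l : ℝ), |l - lam| ≤ 1 → ∀ t ∈ Icc a b, |u l t| ≤ M := by
    intro l hl
    have hcφL : ContinuousOn (fun s => |u l s| + |v l s|) (Icc a p) :=
      (((huC l).mono (Icc_subset_Icc le_rfl (le_of_lt hpb))).abs).add ((hvC l).abs)
    have hchainL : ∀ t ∈ Icc a p, |u l t| + |v l t| ≤ 2 ^ n * (|u l a| + |v l a|) :=
      chain_bound k (fun s => |u l s| + |v l s|) p n a (le_of_lt hap) hcφL
        (fun s _ => by positivity)
        (hkint.mono_set (Icc_subset_Icc le_rfl (le_of_lt hpb))) (fun s _ => hk1 s)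
        (fun c r h1 h2 h3 => hineqL l hl c r h1 h2 h3) hnL
    have h2n : (0:ℝ) ≤ 2 ^ n := by positivity
    have hstart : |u l a| + |v l a| ≤ 2 := by
      rw [hveq l a (ne_of_lt hap), (hic l).1, (hic l).2]
      have h1 : |Real.sin θ| ≤ 1 := abs_le.2 ⟨Real.neg_one_le_sin θ, Real.sin_le_one θ⟩
      have h2 : |(-Real.cos θ)| ≤ 1 := by
        rw [abs_neg]; exact abs_le.2 ⟨Real.neg_one_le_cos θ, Real.cos_le_one θ⟩
      linarith
    have hφL : ∀ t ∈ Icc a p, |u l t| + |v l t| ≤ 2 ^ n * 2 := fun t ht =>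
      le_trans (hchainL t ht) (mul_le_mul_of_nonneg_left hstart h2n)
    have hMsplit : 0 ≤ 2 ^ n * ((1 + |α|) * (2 ^ n * 2)) := by positivity
    intro t ht
    rcases le_total t p with htp | htp
    · have h1 := hφL t ⟨ht.1, htp⟩
      have h2 := abs_nonneg (v l t)
      simp only [hM]
      linarith
    · have hφRp : |u l p| + |u' l p| ≤ (1 + |α|) * (2 ^ n * 2) := by
        have h1 := hφL p ⟨le_of_lt hap, le_rfl⟩
        have hvp : v l p = dm l := by simp [hv]
        rw [hvp] at h1
        have h2 : u' l p = dm l + α * u l p := by have := hdmJ l; linarith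
        have h3 : |u' l p| ≤ |dm l| + |α| * |u l p| := by
          rw [h2]
          refine le_trans (abs_add_le _ _) ?_
          rw [abs_mul]
        have h5 := abs_nonneg (dm l)
        have h6 := abs_nonneg α
        have h8 : |u l p| ≤ 2 ^ n * 2 := by have := abs_nonneg (u l p); linarith
        have h9 : |α| * |u l p| ≤ |α| * (2 ^ n * 2) := mul_le_mul_of_nonneg_left h8 h6
        nlinarith [h9]
      have hcφR : ContinuousOn (fun s => |u l s| + |u' l s|) (Icc p b) :=
        (((huC l).mono (Icc_subset_Icc (le_of_lt hap) le_rfl)).abs).add ((hu'CR l).abs)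
      have hchainR : ∀ t ∈ Icc p b, |u l t| + |u' l t| ≤ 2 ^ n * (|u l p| + |u' l p|) :=
        chain_bound k (fun s => |u l s| + |u' l s|) b n p (le_of_lt hpb) hcφR
          (fun s _ => by positivity)
          (hkint.mono_set (Icc_subset_Icc (le_of_lt hap) le_rfl)) (fun s _ => hk1 s)
          (fun c r h1 h2 h3 => hineqR l hl c r h1 h2 h3) hnR
      have h1 := hchainR t ⟨htp, ht.2⟩
      have h5 : 2 ^ n * (|u l p| + |u' l p|) ≤ 2 ^ n * ((1 + |α|) * (2 ^ n * 2)) :=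
        mul_le_mul_of_nonneg_left hφRp h2n
      have h6 := abs_nonneg (u' l t)
      have h7 : (0:ℝ) ≤ 2 ^ n * 2 := by positivity
      simp only [hM]
      linarith only [h1, h5, h6, h7, hMsplit]
  -- the integrated Wronskian identity across p
  have star : ∀ μ ν : ℝ,
      u' μ x * u ν x - u μ x * u' ν x = (ν - μ) * ∫ t in a..x, u μ t * u ν t := by
    intro μ ν
    set W : ℝ → ℝ := fun t => u' μ t * u ν t - u μ t * u' ν t with hW
    set g : ℝ → ℝ := fun t => (ν - μ) * (u μ t * u ν t) with hg
    have hWd : ∀ t ∈ Icc a b, t ≠ p → HasDerivAt W (g t) t := by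
      intro t ht htp
      have h1 := hderiv μ t ht htp
      have h2 := hderiv ν t ht htp
      have h3 := hode μ t ht htp
      have h4 := hode ν t ht htp
      have h5 := (h3.mul h2).sub (h1.mul h4)
      refine h5.congr_deriv ?_
      simp only [hg]; ring
    have hgC : ContinuousOn g (Icc a b) :=
      continuousOn_const.mul ((huC μ).mul (huC ν))
    have hgint : ∀ c d : ℝ, a ≤ c → c ≤ d → d ≤ b → IntervalIntegrable g volume c d := by
      intro c d h1 h2 h3
      exact (hgC.mono (by rw [uIcc_of_le h2]; exact Icc_subset_Icc h1 h3)).intervalIntegrable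
    have hWa : W a = 0 := by
      simp only [hW, (hic μ).1, (hic μ).2, (hic ν).1, (hic ν).2]; ring
    have hInt : (∫ t in a..x, g t) = W x := by
      rcases lt_or_gt_of_ne hxp with hxlt | hxgt
      · have hWc : ContinuousOn W (Icc a x) := by
          intro t ht
          have htb : t ∈ Icc a b := ⟨ht.1, le_trans ht.2 hxb⟩
          have htp : t ≠ p := ne_of_lt (lt_of_le_of_lt ht.2 hxlt)
          exact (((hu'CA μ t htb htp).mul (huCA ν t htb)).sub
            ((huCA μ t htb).mul (hu'CA ν t htb htp))).continuousWithinAt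
        have := ftc W g a x hax hWc
          (fun t ht => hWd t ⟨le_of_lt ht.1, le_trans (le_of_lt ht.2) hxb⟩
            (ne_of_lt (lt_trans ht.2 hxlt)))
          (hgint a x le_rfl hax hxb)
        rw [this, hWa, sub_zero]
      · set Wm : ℝ := dm μ * u ν p - u μ p * dm ν with hWm
        set Wt : ℝ → ℝ := fun t => if t = p then Wm else W t with hWt
        have hWtL : Tendsto W (𝓝[<] p) (𝓝 Wm) :=
          ((hdmL μ).mul (hcontL ν)).sub ((hcontL μ).mul (hdmL ν))
        have hWtC : ContinuousOn Wt (Icc a p) := by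
          have hWtL' : Tendsto Wt (𝓝[<] p) (𝓝 Wm) := by
            refine hWtL.congr' ?_
            filter_upwards [self_mem_nhdsWithin] with s hs
            simp only [hWt]
            exact (if_neg (ne_of_lt hs)).symm
          intro t ht
          rcases eq_or_lt_of_le ht.2 with heq | htp
          · rw [heq]
            exact (cwa_left hWtL' (by simp [hWt])).mono Icc_subset_Iic_self
          · have htb : t ∈ Icc a b := ⟨ht.1, le_trans (le_of_lt htp) (le_of_lt hpb)⟩
            have hca : ContinuousAt W t :=
              ((hu'CA μ t htb (ne_of_lt htp)).mul (huCA ν t htb)).sub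
                ((huCA μ t htb).mul (hu'CA ν t htb (ne_of_lt htp)))
            refine (hca.congr ?_).continuousWithinAt
            filter_upwards [isOpen_compl_singleton.mem_nhds (ne_of_lt htp)] with s hs
            simp only [hWt]
            exact (if_neg hs).symm
        have hL : (∫ t in a..p, g t) = Wm - W a := by
          have := ftc Wt g a p (le_of_lt hap) hWtC
            (fun t ht => by
              have hd := hWd t ⟨le_of_lt ht.1, le_trans (le_of_lt ht.2) (le_of_lt hpb)⟩
                (ne_of_lt ht.2)
              refine hd.congr_of_eventuallyEq ?_
              filter_upwards [isOpen_compl_singleton.mem_nhds (ne_of_lt ht.2)] with s hs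
              simp only [hWt]
              exact if_neg hs)
            (hgint a p le_rfl (le_of_lt hap) (le_of_lt hpb))
          rw [this]
          simp only [hWt, if_pos rfl, if_neg (ne_of_lt hap)]
        have hWCR : ContinuousOn W (Icc p x) := by
          intro t ht
          rcases eq_or_lt_of_le ht.1 with rfl | htp
          · refine (cwa_right ?_ rfl).mono Icc_subset_Ici_self
            exact ((hderR μ).mul (hcontR ν)).sub ((hcontR μ).mul (hderR ν))
          · have htb : t ∈ Icc a b :=
              ⟨le_trans (le_of_lt hap) (le_of_lt htp), le_trans ht.2 hxb⟩
            exact (((hu'CA μ t htb (ne_of_gt htp)).mul (huCA ν t htb)).sub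
              ((huCA μ t htb).mul (hu'CA ν t htb (ne_of_gt htp)))).continuousWithinAt
        have hR : (∫ t in p..x, g t) = W x - W p := by
          apply ftc W g p x (le_of_lt hxgt) hWCR
            (fun t ht => hWd t ⟨le_trans (le_of_lt hap) (le_of_lt ht.1),
              le_trans (le_of_lt ht.2) hxb⟩ (ne_of_gt ht.1))
            (hgint p x (le_of_lt hap) (le_of_lt hxgt) hxb)
        have hjmp : W p - Wm = 0 := by
          have j1 := hdmJ μ
          have j2 := hdmJ ν
          simp only [hW, hWm]
          linear_combination u ν p * j1 - u μ p * j2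
        have hadd := intervalIntegral.integral_add_adjacent_intervals
          (hgint a p le_rfl (le_of_lt hap) (le_of_lt hpb))
          (hgint p x (le_of_lt hap) (le_of_lt hxgt) hxb)
        rw [← hadd, hL, hR, hWa]
        linarith
    calc u' μ x * u ν x - u μ x * u' ν x = W x := by simp only [hW]
      _ = ∫ t in a..x, g t := hInt.symm
      _ = (ν - μ) * ∫ t in a..x, u μ t * u ν t := by
          simp only [hg]; exact intervalIntegral.integral_const_mul _ _
  -- λ-derivatives at lam
  have hw : HasDerivAt (fun l => u l x) (deriv (fun l => u l x) lam) lam :=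
    ((hentire x).1.differentiableAt).hasDerivAt
  have hz : HasDerivAt (fun l => u' l x) (deriv (fun l => u' l x) lam) lam :=
    ((hentire x).2.differentiableAt).hasDerivAt
  set w : ℝ := deriv (fun l => u l x) lam with hwdef
  set z : ℝ := deriv (fun l => u' l x) lam with hzdef
  set G : ℝ → ℝ := fun l => u' lam x * u l x - u lam x * u' l x with hG
  have hGd : HasDerivAt G (u' lam x * w - u lam x * z) lam :=
    (hw.const_mul (u' lam x)).sub (hz.const_mul (u lam x))
  have hGlam : G lam = 0 := by simp only [hG]; ring
  have hslope : Tendsto (slope G lam) (𝓝[≠] lam) (𝓝 (u' lam x * w - u lam x * z)) :=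
    hasDerivAt_iff_tendsto_slope.1 hGd
  have hq : Tendsto (fun l => ∫ t in a..x, u lam t * u l t) (𝓝[≠] lam)
      (𝓝 (u' lam x * w - u lam x * z)) := by
    refine hslope.congr' ?_
    filter_upwards [self_mem_nhdsWithin] with l hl
    have hstar := star lam l
    have hne : l - lam ≠ 0 := sub_ne_zero.2 hl
    rw [slope_def_field, hGlam, sub_zero]
    simp only [hG]
    rw [hstar, mul_div_cancel_left₀ _ hne]
  have hq2 : Tendsto (fun l => ∫ t in a..x, u lam t * u l t) (𝓝[≠] lam)
      (𝓝 (∫ t in a..x, (u lam t)^2)) := by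
    refine Tendsto.mono_left ?_ nhdsWithin_le_nhds
    have hsub : uIoc a x ⊆ Icc a b := by
      rw [uIoc_of_le hax]
      exact Ioc_subset_Icc_self.trans (Icc_subset_Icc le_rfl hxb)
    apply intervalIntegral.tendsto_integral_filter_of_dominated_convergence
      (bound := fun _ => M * M)
    · apply Eventually.of_forall
      intro l
      have hmeas : AEStronglyMeasurable (fun t => u lam t * u l t)
          (volume.restrict (Icc a b)) :=
        ((huC lam).mul (huC l)).aestronglyMeasurable measurableSet_Icc
      exact hmeas.mono_measure (Measure.restrict_mono hsub le_rfl)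
    · filter_upwards [Metric.closedBall_mem_nhds lam one_pos] with l hl
      apply ae_of_all
      intro t ht
      have htb := hsub ht
      have hl' : |l - lam| ≤ 1 := by
        rw [← Real.dist_eq]; exact Metric.mem_closedBall.1 hl
      have b1 := hbound lam (by simp) t htb
      have b2 := hbound l hl' t htb
      rw [Real.norm_eq_abs, abs_mul]
      exact mul_le_mul b1 b2 (abs_nonneg _) hM0
    · exact intervalIntegrable_const
    · apply ae_of_all
      intro t ht
      have hc : Tendsto (fun l => u l t) (𝓝 lam) (𝓝 (u lam t)) :=
        ((hentire t).1.continuous.tendsto lam)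
      have := tendsto_const_nhds.mul hc
        (f := fun _ : ℝ => u lam t)
      convert this using 1
      rw [sq]
  have hkey : u' lam x * w - u lam x * z = ∫ t in a..x, (u lam t)^2 :=
    tendsto_nhds_unique hq hq2
  have hdiv : HasDerivAt (fun l => u' l x / u l x)
      ((z * u lam x - u' lam x * w) / (u lam x) ^ 2) lam := hz.div hw h0
  rw [hdiv.deriv, ← hkey]
  field_simp
  ring
end

section
/- Let u_{a,α}, u_{b,α} be solutions of the δ-interaction equation satisfying fixed boundary conditions at a and b respectively, and define G_α(z;p,p) = u_{a,α}(z,p) u_{b,α}(z,p) / W_p(u_{a,α}(z), u_{b,α}(z)). Then for every α ∈ ℝ, G_α(z;p,p) = G_0(z;p,p) / (1 - α G_0(z;p,p)), where G_0 corresponds to the problem without point interaction. -/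
open Filter Topology Set

/-- **The diagonal Green function with one δ-interaction.**
Let `u_{a,α}, u_{b,α}` solve `-u'' + V u = z u` with a δ-interaction of strength `α`
at `p`, satisfying fixed boundary conditions at `a` resp. `b`, and let
`u_{a,0}, u_{b,0}` solve the same problem without interaction, agreeing with the
interacting solutions on `x ≤ p` resp. `x ≥ p`.  With
`G_α(z;p,p) = u_{a,α}(p) u_{b,α}(p) / W_p(u_{a,α},u_{b,α})`,
one has `G_α(z;p,p) = G₀(z;p,p) / (1 - α G₀(z;p,p))`.
(Values at `p` of derivatives are right limits; `W₀(p) ≠ 0` so that `G₀` is defined.) -/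
theorem green_function_one_delta_interaction
    (V : ℝ → ℝ) (a b p : ℝ) (α : ℝ) (z : ℂ) (θ γ : ℝ)
    (hab : a < b) (hp : p ∈ Ioo a b) (hV : MeasureTheory.IntegrableOn V (Icc a b))
    (ua₀ ua₀' uaα uaα' ub₀ ub₀' ubα ubα' : ℝ → ℂ)
    -- free solutions (no interaction): classical solutions on all of [a,b]
    (h0a : ∀ t ∈ Icc a b, HasDerivAt ua₀ (ua₀' t) t ∧
      HasDerivAt ua₀' ((V t : ℂ) * ua₀ t - z * ua₀ t) t)
    (h0b : ∀ t ∈ Icc a b, HasDerivAt ub₀ (ub₀' t) t ∧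
      HasDerivAt ub₀' ((V t : ℂ) * ub₀ t - z * ub₀ t) t)
    -- interacting solutions: classical away from p
    (hαa : ∀ t ∈ Icc a b, t ≠ p → HasDerivAt uaα (uaα' t) t ∧
      HasDerivAt uaα' ((V t : ℂ) * uaα t - z * uaα t) t)
    (hαb : ∀ t ∈ Icc a b, t ≠ p → HasDerivAt ubα (ubα' t) t ∧
      HasDerivAt ubα' ((V t : ℂ) * ubα t - z * ubα t) t)
    -- continuity and δ-jump conditions at p (values at p are right limits)
    (hconta : Tendsto uaα (𝓝[<] p) (𝓝 (uaα p)))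
    (hcontb : Tendsto ubα (𝓝[<] p) (𝓝 (ubα p)))
    (hjumpa : ∃ dm, Tendsto uaα' (𝓝[<] p) (𝓝 dm) ∧ uaα' p - dm = (α : ℂ) * uaα p)
    (hjumpb : ∃ dm, Tendsto ubα' (𝓝[<] p) (𝓝 dm) ∧ ubα' p - dm = (α : ℂ) * ubα p)
    -- boundary conditions at a and at b
    (hbca0 : ua₀ a * (Real.cos θ : ℂ) + ua₀' a * (Real.sin θ : ℂ) = 0)
    (hbcaα : uaα a * (Real.cos θ : ℂ) + uaα' a * (Real.sin θ : ℂ) = 0)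
    (hbcb0 : ub₀ b * (Real.cos γ : ℂ) + ub₀' b * (Real.sin γ : ℂ) = 0)
    (hbcbα : ubα b * (Real.cos γ : ℂ) + ubα' b * (Real.sin γ : ℂ) = 0)
    -- agreement: u_{a,α} = u_{a,0} on x ≤ p and u_{b,α} = u_{b,0} on x ≥ p
    (heqa : ∀ t ≤ p, uaα t = ua₀ t) (heqa' : ∀ t < p, uaα' t = ua₀' t)
    (heqb : ∀ t, p ≤ t → ubα t = ub₀ t ∧ ubα' t = ub₀' t)
    -- the free Wronskian does not vanish (z is not an eigenvalue of H₀)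
    (hW₀ : ua₀ p * ub₀' p - ua₀' p * ub₀ p ≠ 0) :
    uaα p * ubα p / (uaα p * ubα' p - uaα' p * ubα p)
      = (ua₀ p * ub₀ p / (ua₀ p * ub₀' p - ua₀' p * ub₀ p))
        / (1 - (α : ℂ) * (ua₀ p * ub₀ p / (ua₀ p * ub₀' p - ua₀' p * ub₀ p))) := by

  have hpIcc : p ∈ Icc a b := Ioo_subset_Icc_self hp
  have hA : uaα p = ua₀ p := heqa p le_rfl
  have hB : ubα p = ub₀ p := (heqb p le_rfl).1
  have hB' : ubα' p = ub₀' p := (heqb p le_rfl).2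
  -- identify u_{a,α}'(p)
  obtain ⟨dm, hdm, hjump⟩ := hjumpa
  have hcont : ContinuousAt ua₀' p := (h0a p hpIcc).2.continuousAt
  have h1 : Tendsto ua₀' (𝓝[<] p) (𝓝 (ua₀' p)) :=
    hcont.continuousWithinAt.tendsto
  have h2 : Tendsto uaα' (𝓝[<] p) (𝓝 (ua₀' p)) := by
    refine h1.congr' ?_
    filter_upwards [self_mem_nhdsWithin] with t ht
    exact (heqa' t ht).symm
  have hdmeq : dm = ua₀' p := tendsto_nhds_unique hdm h2
  have hA' : uaα' p = ua₀' p + (α : ℂ) * ua₀ p := by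
    have := hjump
    rw [hdmeq, hA] at this
    linear_combination this
  rw [hA, hB, hB', hA']
  set A := ua₀ p * ub₀ p with hAdef
  set W := ua₀ p * ub₀' p - ua₀' p * ub₀ p with hWdef
  have hLHS : ua₀ p * ub₀' p - (ua₀' p + (α : ℂ) * ua₀ p) * ub₀ p = W - (α : ℂ) * A := by
    rw [hWdef, hAdef]; ring
  rw [hLHS]
  have hden : 1 - (α : ℂ) * (A / W) = (W - (α : ℂ) * A) / W := by
    field_simp
  rw [hden]
  by_cases hc : W - (α : ℂ) * A = 0
  · simp [hc]
  · field_simp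
end

section
/- Fix E ∈ ℝ and consider the family H_{α,p} (regular Sturm-Liouville operators with a single δ-interaction of strength α at p and fixed separated boundary conditions). Define A(E) = {α ∈ ℝ : E ∈ σ_p(H_{α,p})}. Then either A(E) has at most one element, or A(E) = ℝ. -/
open Filter Topology Set

/-- `u` (with derivative `u'`) is an eigenfunction of the regular Sturm–Liouville
operator `H_{α,p}` on `[a,b]` with potential `V`, δ-interaction of strength `α` at `p`,
eigenvalue `E` and separated boundary conditions with angles `θ` (at `a`), `γ` (at `b`).
The value `u' p` is the right limit `u'(p+)`. -/
structure OneDeltaEigenfun (V : ℝ → ℝ) (a b p θ γ : ℝ) (α E : ℝ) (u u' : ℝ → ℝ) : Prop where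
  deriv : ∀ t ∈ Set.Icc a b, t ≠ p → HasDerivAt u (u' t) t
  ode : ∀ t ∈ Set.Icc a b, t ≠ p → HasDerivAt u' (V t * u t - E * u t) t
  contR : Filter.Tendsto u (nhdsWithin p (Set.Ioi p)) (nhds (u p))
  contL : Filter.Tendsto u (nhdsWithin p (Set.Iio p)) (nhds (u p))
  derivR : Filter.Tendsto u' (nhdsWithin p (Set.Ioi p)) (nhds (u' p))
  jump : ∃ dm, Filter.Tendsto u' (nhdsWithin p (Set.Iio p)) (nhds dm) ∧ u' p - dm = α * u p
  bca : u a * Real.cos θ + u' a * Real.sin θ = 0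
  bcb : u b * Real.cos γ + u' b * Real.sin γ = 0

private lemma constAux {f : ℝ → ℝ} {c d : ℝ} (hcd : c ≤ d)
    (hf : ∀ x ∈ Set.Icc c d, HasDerivAt f 0 x) : f d = f c :=
  constant_of_has_deriv_right_zero
    (fun x hx => (hf x hx).continuousAt.continuousWithinAt)
    (fun x hx => (hf x (Set.Ico_subset_Icc_self hx)).hasDerivWithinAt)
    d (Set.right_mem_Icc.2 hcd)

/-- **Dichotomy for the coupling constants for which `E` is an eigenvalue.**
For fixed `E ∈ ℝ`, the set `A(E) = {α : E ∈ σ_p(H_{α,p})}` either has at most one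
element or is all of `ℝ`. -/
theorem coupling_set_subsingleton_or_univ
    (V : ℝ → ℝ) (a b p θ γ E : ℝ) (hab : a < b) (hp : p ∈ Ioo a b)
    (hθ : θ ∈ Ico 0 Real.pi) (hγ : γ ∈ Ico 0 Real.pi)
    (hV : MeasureTheory.IntegrableOn V (Icc a b)) :
    {α : ℝ | ∃ u u' : ℝ → ℝ, (∃ t ∈ Icc a b, u t ≠ 0) ∧
        OneDeltaEigenfun V a b p θ γ α E u u'}.Subsingleton ∨
    {α : ℝ | ∃ u u' : ℝ → ℝ, (∃ t ∈ Icc a b, u t ≠ 0) ∧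
        OneDeltaEigenfun V a b p θ γ α E u u'} = univ := by
  by_cases hdeg : ∃ α u u', (∃ t ∈ Icc a b, u t ≠ 0) ∧
      OneDeltaEigenfun V a b p θ γ α E u u' ∧ u p = 0
  · -- an eigenfunction vanishing at p works for every coupling constant
    right
    obtain ⟨α₀, u, u', hnt, h, hup⟩ := hdeg
    refine eq_univ_of_forall fun β => ⟨u, u', hnt, ?_⟩
    obtain ⟨dm, hdm, hj⟩ := h.jump
    rw [hup, mul_zero] at hj
    exact { h with jump := ⟨dm, hdm, by rw [hup, mul_zero]; exact hj⟩ }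
  · left
    push_neg at hdeg
    rintro α₁ ⟨u₁, u₁', hnt₁, h₁⟩ α₂ ⟨u₂, u₂', hnt₂, h₂⟩
    have hp₁ : u₁ p ≠ 0 := hdeg α₁ u₁ u₁' hnt₁ h₁
    have hp₂ : u₂ p ≠ 0 := hdeg α₂ u₂ u₂' hnt₂ h₂
    obtain ⟨dm₁, hdm₁, hj₁⟩ := h₁.jump
    obtain ⟨dm₂, hdm₂, hj₂⟩ := h₂.jump
    -- the Wronskian
    have hwd : ∀ t ∈ Icc a b, t ≠ p →
        HasDerivAt (fun s => u₁ s * u₂' s - u₁' s * u₂ s) 0 t := by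
      intro t ht htp
      have h := ((h₁.deriv t ht htp).mul (h₂.ode t ht htp)).sub
        ((h₁.ode t ht htp).mul (h₂.deriv t ht htp))
      exact h.congr_deriv (by ring)
    have hwa : u₁ a * u₂' a - u₁' a * u₂ a = 0 := by
      have hps : Real.sin θ ^ 2 + Real.cos θ ^ 2 = 1 := Real.sin_sq_add_cos_sq θ
      have e1 := h₁.bca
      have e2 := h₂.bca
      linear_combination (Real.cos θ * u₂' a - Real.sin θ * u₂ a) * e1 +
        (Real.sin θ * u₁ a - Real.cos θ * u₁' a) * e2 -
        (u₁ a * u₂' a - u₁' a * u₂ a) * hps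
    have hwb : u₁ b * u₂' b - u₁' b * u₂ b = 0 := by
      have hps : Real.sin γ ^ 2 + Real.cos γ ^ 2 = 1 := Real.sin_sq_add_cos_sq γ
      have e1 := h₁.bcb
      have e2 := h₂.bcb
      linear_combination (Real.cos γ * u₂' b - Real.sin γ * u₂ b) * e1 +
        (Real.sin γ * u₁ b - Real.cos γ * u₁' b) * e2 -
        (u₁ b * u₂' b - u₁' b * u₂ b) * hps
    -- Wronskian vanishes on [a,p)
    have hL0 : ∀ t ∈ Ico a p, u₁ t * u₂' t - u₁' t * u₂ t = 0 := by
      intro t ht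
      have hc : (fun s => u₁ s * u₂' s - u₁' s * u₂ s) t
          = (fun s => u₁ s * u₂' s - u₁' s * u₂ s) a := by
        refine constAux ht.1 fun x hx => hwd x
          ⟨hx.1, hx.2.trans (le_of_lt (ht.2.trans hp.2))⟩
          (ne_of_lt (lt_of_le_of_lt hx.2 ht.2))
      simpa [hwa] using hc
    -- Wronskian vanishes on (p,b]
    have hR0 : ∀ t ∈ Ioc p b, u₁ t * u₂' t - u₁' t * u₂ t = 0 := by
      intro t ht
      have hc : (fun s => u₁ s * u₂' s - u₁' s * u₂ s) b
          = (fun s => u₁ s * u₂' s - u₁' s * u₂ s) t := by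
        refine constAux ht.2 fun x hx => hwd x
          ⟨(le_of_lt (hp.1.trans ht.1)).trans hx.1, hx.2⟩
          (ne_of_gt (lt_of_lt_of_le ht.1 hx.1))
      simpa [hwb] using hc.symm
    -- left and right limits of the Wronskian at p
    have hLlim : u₁ p * dm₂ - dm₁ * u₂ p = 0 := by
      have t1 : Tendsto (fun s => u₁ s * u₂' s - u₁' s * u₂ s) (𝓝[<] p)
          (𝓝 (u₁ p * dm₂ - dm₁ * u₂ p)) :=
        (h₁.contL.mul hdm₂).sub (hdm₁.mul h₂.contL)
      have t2 : Tendsto (fun s => u₁ s * u₂' s - u₁' s * u₂ s) (𝓝[<] p) (𝓝 0) := by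
        refine Tendsto.congr' ?_ tendsto_const_nhds
        filter_upwards [Ioo_mem_nhdsLT_of_mem ⟨hp.1, le_refl p⟩] with x hx
        exact (hL0 x ⟨le_of_lt hx.1, hx.2⟩).symm
      exact tendsto_nhds_unique t1 t2
    have hRlim : u₁ p * u₂' p - u₁' p * u₂ p = 0 := by
      have t1 : Tendsto (fun s => u₁ s * u₂' s - u₁' s * u₂ s) (𝓝[>] p)
          (𝓝 (u₁ p * u₂' p - u₁' p * u₂ p)) :=
        (h₁.contR.mul h₂.derivR).sub (h₁.derivR.mul h₂.contR)
      have t2 : Tendsto (fun s => u₁ s * u₂' s - u₁' s * u₂ s) (𝓝[>] p) (𝓝 0) := by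
        refine Tendsto.congr' ?_ tendsto_const_nhds
        filter_upwards [Ioo_mem_nhdsGT_of_mem ⟨le_refl p, hp.2⟩] with x hx
        exact (hR0 x ⟨hx.1, le_of_lt hx.2⟩).symm
      exact tendsto_nhds_unique t1 t2
    have key : (α₁ - α₂) * (u₁ p * u₂ p) = 0 := by
      linear_combination (-(u₂ p)) * hj₁ + u₁ p * hj₂ - hRlim + hLlim
    rcases mul_eq_zero.1 key with h | h
    · linarith
    · exact absurd h (mul_ne_zero hp₁ hp₂)
end

section
/- Suppose |V(x)| ≤ K for all x ∈ (a,b), and suppose some interval J ⊆ (a,b) with length |J| ≤ 2/√(K + |E|) contains at least two of the interaction points x_n. Then P(B) = 0 for every measurable subset B of A(E) = {ω : E ∈ σ_p(H_ω)}. -/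
open Filter Topology Set MeasureTheory

/-- `u, u'` solve `-u'' + V u = E u` on `(lo,hi)` away from the interaction points
`x n`, with δ-interaction jump conditions of strength `cpl n` at each `x n ∈ (lo,hi)`.
At an interaction point the value `u' (x n)` is the right limit `u'(x n +)`. -/
structure DeltaODE (V : ℝ → ℝ) (lo hi : ℝ) {ι : Type*} (x : ι → ℝ) (cpl : ι → ℝ)
    (E : ℝ) (u u' : ℝ → ℝ) : Prop where
  deriv : ∀ t ∈ Set.Ioo lo hi, (∀ n, t ≠ x n) → HasDerivAt u (u' t) t
  ode : ∀ t ∈ Set.Ioo lo hi, (∀ n, t ≠ x n) → HasDerivAt u' (V t * u t - E * u t) t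
  contR : ∀ n, x n ∈ Set.Ioo lo hi →
    Filter.Tendsto u (nhdsWithin (x n) (Set.Ioi (x n))) (nhds (u (x n)))
  contL : ∀ n, x n ∈ Set.Ioo lo hi →
    Filter.Tendsto u (nhdsWithin (x n) (Set.Iio (x n))) (nhds (u (x n)))
  derivR : ∀ n, x n ∈ Set.Ioo lo hi →
    Filter.Tendsto u' (nhdsWithin (x n) (Set.Ioi (x n))) (nhds (u' (x n)))
  jump : ∀ n, x n ∈ Set.Ioo lo hi → ∃ dm,
    Filter.Tendsto u' (nhdsWithin (x n) (Set.Iio (x n))) (nhds dm) ∧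
    u' (x n) - dm = cpl n * u (x n)

/-- Witness that `E` is an eigenvalue of the self-adjoint operator `H_ω` on `L²(a,b)`
with δ-interactions of strengths `ω n` at the points `x n` and eigenfunction `u`:
`u` is nontrivial, square integrable, solves the equation with the interaction
conditions, and satisfies the separated boundary condition at each regular endpoint
(the angle is `some θ`; `none` means no condition, for a limit point endpoint). -/
structure EigWit (V : ℝ → ℝ) (a b : ℝ) {ι : Type*} (x : ι → ℝ) (ω : ι → ℝ)
    (bca bcb : Option ℝ) (E : ℝ) (u u' : ℝ → ℝ) : Prop where
  nontriv : ∃ t ∈ Set.Ioo a b, u t ≠ 0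
  sq : MeasureTheory.MemLp u 2 (MeasureTheory.volume.restrict (Set.Ioo a b))
  sol : DeltaODE V a b x ω E u u'
  bc_a : ∀ θ ∈ bca, ContinuousWithinAt u (Set.Ici a) a ∧
    ContinuousWithinAt u' (Set.Ici a) a ∧ u a * Real.cos θ + u' a * Real.sin θ = 0
  bc_b : ∀ γ ∈ bcb, ContinuousWithinAt u (Set.Iic b) b ∧
    ContinuousWithinAt u' (Set.Iic b) b ∧ u b * Real.cos γ + u' b * Real.sin γ = 0

set_option linter.unusedSectionVars false
set_option linter.unusedVariables false
set_option maxHeartbeats 1000000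

namespace DeltaODE

variable {V : ℝ → ℝ} {lo hi : ℝ} {ι : Type*} {x : ι → ℝ} {cpl cpl' : ι → ℝ} {E : ℝ}
  {u u' v v' w w' : ℝ → ℝ}

lemma restrict (h : DeltaODE V lo hi x cpl E u u') {lo' hi' : ℝ}
    (hsub : Set.Ioo lo' hi' ⊆ Set.Ioo lo hi) : DeltaODE V lo' hi' x cpl E u u' where
  deriv t ht := h.deriv t (hsub ht)
  ode t ht := h.ode t (hsub ht)
  contR n hn := h.contR n (hsub hn)
  contL n hn := h.contL n (hsub hn)
  derivR n hn := h.derivR n (hsub hn)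
  jump n hn := h.jump n (hsub hn)

lemma congr_cpl (h : DeltaODE V lo hi x cpl E u u')
    (heq : ∀ n, x n ∈ Set.Ioo lo hi → cpl' n = cpl n) : DeltaODE V lo hi x cpl' E u u' where
  deriv := h.deriv
  ode := h.ode
  contR := h.contR
  contL := h.contL
  derivR := h.derivR
  jump n hn := by rw [heq n hn]; exact h.jump n hn

lemma congr_fun (h : DeltaODE V lo hi x cpl E u u') (hw : ∀ t, w t = u t)
    (hw' : ∀ t, w' t = u' t) : DeltaODE V lo hi x cpl E w w' := by
  have h1 : w = u := funext hw
  have h2 : w' = u' := funext hw'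
  rw [h1, h2]; exact h

lemma comb (hu : DeltaODE V lo hi x cpl E u u') (hv : DeltaODE V lo hi x cpl E v v')
    (α β : ℝ) : DeltaODE V lo hi x cpl E (fun t => α * u t + β * v t)
      (fun t => α * u' t + β * v' t) where
  deriv t ht htx := ((hu.deriv t ht htx).const_mul α).add ((hv.deriv t ht htx).const_mul β)
  ode t ht htx := by
    have := ((hu.ode t ht htx).const_mul α).add ((hv.ode t ht htx).const_mul β)
    exact this.congr_deriv (by ring)
  contR n hn := ((hu.contR n hn).const_mul α).add ((hv.contR n hn).const_mul β)
  contL n hn := ((hu.contL n hn).const_mul α).add ((hv.contL n hn).const_mul β)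
  derivR n hn := ((hu.derivR n hn).const_mul α).add ((hv.derivR n hn).const_mul β)
  jump n hn := by
    obtain ⟨dmu, hdmu, hju⟩ := hu.jump n hn
    obtain ⟨dmv, hdmv, hjv⟩ := hv.jump n hn
    refine ⟨α * dmu + β * dmv, (hdmu.const_mul α).add (hdmv.const_mul β), ?_⟩
    linear_combination α * hju + β * hjv

lemma contAt (h : DeltaODE V lo hi x cpl E u u') {t : ℝ} (ht : t ∈ Set.Ioo lo hi) :
    ContinuousAt u t := by
  by_cases hex : ∃ n, t = x n
  · obtain ⟨n, rfl⟩ := hex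
    have hL : ContinuousWithinAt u (Set.Iio (x n)) (x n) := h.contL n ht
    have hR : ContinuousWithinAt u (Set.Ioi (x n)) (x n) := h.contR n ht
    have := hL.union hR
    rw [Set.Iio_union_Ioi] at this
    exact continuousWithinAt_compl_self.mp this
  · push_neg at hex
    exact (h.deriv t ht hex).continuousAt

/-- `u'` is continuous at non-interaction points. -/
lemma contAt' (h : DeltaODE V lo hi x cpl E u u') {t : ℝ} (ht : t ∈ Set.Ioo lo hi)
    (htx : ∀ n, t ≠ x n) : ContinuousAt u' t :=
  (h.ode t ht htx).continuousAt

end DeltaODE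

section Aux
variable {ι : Type*} [Countable ι] {x : ι → ℝ}

/-- In a nonempty open interval there is a point avoiding all the (countably many)
interaction points. -/
lemma exists_noninteraction {r s : ℝ} (hrs : r < s) :
    ∃ p ∈ Set.Ioo r s, ∀ n, p ≠ x n := by
  by_contra hcon
  push_neg at hcon
  have hsub : Set.Ioo r s ⊆ Set.range x := by
    intro p hp
    obtain ⟨n, hn⟩ := hcon p hp
    exact ⟨n, hn.symm⟩
  have hcnt : (Set.Ioo r s).Countable := (Set.countable_range x).mono hsub
  have h0 : (volume (Set.Ioo r s)) = 0 := hcnt.measure_zero _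
  rw [Real.volume_Ioo] at h0
  simp only [ENNReal.ofReal_eq_zero, sub_nonpos] at h0
  linarith

/-- A jump-free interval just to the right of `T`. -/
lemma jumpfree_right {lo hi T : ℝ}
    (hfin : ∀ Kc : Set ℝ, IsCompact Kc → Kc ⊆ Set.Ioo lo hi → {n | x n ∈ Kc}.Finite)
    (hT : T ∈ Set.Ioo lo hi) :
    ∃ e, T < e ∧ e < hi ∧ ∀ t ∈ Set.Ioo T e, ∀ n, t ≠ x n := by
  set q := (T + hi) / 2 with hq
  have hTq : T < q := by simp only [hq]; linarith [hT.2]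
  have hqhi : q < hi := by simp only [hq]; linarith [hT.2]
  have hsub : Set.Icc T q ⊆ Set.Ioo lo hi := fun t ht =>
    ⟨lt_of_lt_of_le hT.1 ht.1, lt_of_le_of_lt ht.2 hqhi⟩
  have hF : {n | x n ∈ Set.Icc T q}.Finite := hfin _ isCompact_Icc hsub
  have hG : (insert q ((x '' {n | x n ∈ Set.Icc T q}) ∩ Set.Ioi T)).Finite :=
    ((hF.image x).inter_of_left _).insert q
  set G := insert q ((x '' {n | x n ∈ Set.Icc T q}) ∩ Set.Ioi T) with hGdef
  have hGne : G.Nonempty := ⟨q, Set.mem_insert _ _⟩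
  obtain ⟨e, heG, hemin⟩ := Set.exists_min_image G id hG hGne
  have hepos : T < e := by
    rcases heG with h | h
    · rw [h]; exact hTq
    · exact h.2
  have heq : e ≤ q := hemin q (Set.mem_insert _ _)
  refine ⟨e, hepos, lt_of_le_of_lt heq hqhi, ?_⟩
  rintro t ⟨ht1, ht2⟩ n rfl
  have hmem : x n ∈ G := by
    refine Set.mem_insert_of_mem _ ⟨⟨n, ?_, rfl⟩, ht1⟩
    exact ⟨le_of_lt ht1, le_trans (le_of_lt ht2) heq⟩
  exact absurd (hemin _ hmem) (not_le.mpr ht2)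

/-- A jump-free interval just to the left of `T`. -/
lemma jumpfree_left {lo hi T : ℝ}
    (hfin : ∀ Kc : Set ℝ, IsCompact Kc → Kc ⊆ Set.Ioo lo hi → {n | x n ∈ Kc}.Finite)
    (hT : T ∈ Set.Ioo lo hi) :
    ∃ e, lo < e ∧ e < T ∧ ∀ t ∈ Set.Ioo e T, ∀ n, t ≠ x n := by
  set q := (lo + T) / 2 with hq
  have hTq : q < T := by simp only [hq]; linarith [hT.1]
  have hqlo : lo < q := by simp only [hq]; linarith [hT.1]
  have hsub : Set.Icc q T ⊆ Set.Ioo lo hi := fun t ht =>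
    ⟨lt_of_lt_of_le hqlo ht.1, lt_of_le_of_lt ht.2 hT.2⟩
  have hF : {n | x n ∈ Set.Icc q T}.Finite := hfin _ isCompact_Icc hsub
  have hG : (insert q ((x '' {n | x n ∈ Set.Icc q T}) ∩ Set.Iio T)).Finite :=
    ((hF.image x).inter_of_left _).insert q
  set G := insert q ((x '' {n | x n ∈ Set.Icc q T}) ∩ Set.Iio T) with hGdef
  have hGne : G.Nonempty := ⟨q, Set.mem_insert _ _⟩
  obtain ⟨e, heG, hemax⟩ := Set.exists_max_image G id hG hGne
  have hepos : e < T := by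
    rcases heG with h | h
    · rw [h]; exact hTq
    · exact h.2
  have heq : q ≤ e := hemax q (Set.mem_insert _ _)
  refine ⟨e, lt_of_lt_of_le hqlo heq, hepos, ?_⟩
  rintro t ⟨ht1, ht2⟩ n rfl
  have hmem : x n ∈ G := by
    refine Set.mem_insert_of_mem _ ⟨⟨n, ?_, rfl⟩, ht2⟩
    exact ⟨le_trans heq (le_of_lt ht1), le_of_lt ht2⟩
  exact absurd (hemax _ hmem) (not_le.mpr ht1)

end Aux

/-- Grönwall-type uniqueness on a jump-free interval, with vanishing limit data at
the left endpoint. -/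
lemma gron_right {g g' q : ℝ → ℝ} {r s M : ℝ}
    (hd : ∀ t ∈ Set.Ioo r s, HasDerivAt g (g' t) t)
    (hd2 : ∀ t ∈ Set.Ioo r s, HasDerivAt g' (q t) t)
    (hq : ∀ t ∈ Set.Ioo r s, |q t| ≤ M * |g t|)
    (h0 : Tendsto g (nhdsWithin r (Set.Ioi r)) (nhds 0))
    (h0' : Tendsto g' (nhdsWithin r (Set.Ioi r)) (nhds 0)) :
    ∀ t ∈ Set.Ioo r s, g t = 0 ∧ g' t = 0 := by
  intro t ht
  set L := max 1 M with hL
  have hL1 : (1:ℝ) ≤ L := le_max_left _ _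
  have hLM : M ≤ L := le_max_right _ _
  have hL0 : (0:ℝ) ≤ L := le_trans zero_le_one hL1
  set F : ℝ → ℝ × ℝ := fun τ => (g τ, g' τ) with hF
  -- key inequality from any starting point p ∈ (r, t)
  have key : ∀ p ∈ Set.Ioo r t, ‖F t‖ ≤ ‖F p‖ * Real.exp (L * (t - r)) := by
    intro p hp
    have hsub : Set.Icc p t ⊆ Set.Ioo r s := fun τ hτ =>
      ⟨lt_of_lt_of_le hp.1 hτ.1, lt_of_le_of_lt hτ.2 ht.2⟩
    have hcont : ContinuousOn F (Set.Icc p t) := by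
      intro τ hτ
      exact ((hd τ (hsub hτ)).continuousAt.continuousWithinAt).prodMk
        ((hd2 τ (hsub hτ)).continuousAt.continuousWithinAt)
    have hder : ∀ τ ∈ Set.Ico p t, HasDerivWithinAt F (g' τ, q τ) (Set.Ici τ) τ := by
      intro τ hτ
      have hτ' : τ ∈ Set.Ioo r s := hsub ⟨hτ.1, le_of_lt hτ.2⟩
      exact ((hd τ hτ').prodMk (hd2 τ hτ')).hasDerivWithinAt
    have hbound : ∀ τ ∈ Set.Ico p t, ‖(g' τ, q τ)‖ ≤ L * ‖F τ‖ + 0 := by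
      intro τ hτ
      have hτ' : τ ∈ Set.Ioo r s := hsub ⟨hτ.1, le_of_lt hτ.2⟩
      have h1 : ‖(g' τ, q τ)‖ = max |g' τ| |q τ| := by
        rw [Prod.norm_def]; simp [Real.norm_eq_abs]
      have h2 : ‖F τ‖ = max |g τ| |g' τ| := by
        rw [Prod.norm_def]; simp [Real.norm_eq_abs, hF]
      rw [h1, h2, add_zero]
      rcases max_cases |g' τ| |q τ| with ⟨h3, _⟩ | ⟨h3, _⟩ <;> rw [h3]
      · calc |g' τ| = 1 * |g' τ| := by ring
          _ ≤ L * max |g τ| |g' τ| := by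
            apply mul_le_mul hL1 (le_max_right _ _) (abs_nonneg _)
            exact hL0
      · calc |q τ| ≤ M * |g τ| := hq τ hτ'
          _ ≤ L * max |g τ| |g' τ| := by
            apply mul_le_mul hLM (le_max_left _ _) (abs_nonneg _) hL0
    have := norm_le_gronwallBound_of_norm_deriv_right_le hcont hder (le_refl ‖F p‖) hbound
      t ⟨le_of_lt hp.2, le_refl t⟩
    rw [gronwallBound_ε0] at this
    calc ‖F t‖ ≤ ‖F p‖ * Real.exp (L * (t - p)) := this
      _ ≤ ‖F p‖ * Real.exp (L * (t - r)) := by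
        apply mul_le_mul_of_nonneg_left _ (norm_nonneg _)
        apply Real.exp_le_exp.mpr
        apply mul_le_mul_of_nonneg_left _ hL0
        linarith [hp.1]
  -- limit as p → r+
  have hlim : Tendsto (fun p => ‖F p‖ * Real.exp (L * (t - r)))
      (nhdsWithin r (Set.Ioi r)) (nhds 0) := by
    have h1 : Tendsto F (nhdsWithin r (Set.Ioi r)) (nhds ((0:ℝ), (0:ℝ))) :=
      h0.prodMk_nhds h0'
    have h2 : Tendsto (fun p => ‖F p‖) (nhdsWithin r (Set.Ioi r)) (nhds ‖((0:ℝ),(0:ℝ))‖) :=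
      h1.norm
    rw [show ‖((0:ℝ),(0:ℝ))‖ = 0 by simp] at h2
    have := h2.mul_const (Real.exp (L * (t - r)))
    rwa [zero_mul] at this
  have hle : ‖F t‖ ≤ 0 := by
    refine ge_of_tendsto hlim ?_
    filter_upwards [Ioo_mem_nhdsGT_of_mem ⟨le_refl r, ht.1⟩] with p hp
    exact key p hp
  have h0n : ‖F t‖ = 0 := le_antisymm hle (norm_nonneg _)
  have := norm_eq_zero.mp h0n
  rw [Prod.ext_iff] at this
  exact ⟨this.1, this.2⟩

/-- Mirror image of `gron_right`: vanishing limit data at the right endpoint. -/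
lemma gron_left {g g' q : ℝ → ℝ} {r s M : ℝ}
    (hd : ∀ t ∈ Set.Ioo r s, HasDerivAt g (g' t) t)
    (hd2 : ∀ t ∈ Set.Ioo r s, HasDerivAt g' (q t) t)
    (hq : ∀ t ∈ Set.Ioo r s, |q t| ≤ M * |g t|)
    (h0 : Tendsto g (nhdsWithin s (Set.Iio s)) (nhds 0))
    (h0' : Tendsto g' (nhdsWithin s (Set.Iio s)) (nhds 0)) :
    ∀ t ∈ Set.Ioo r s, g t = 0 ∧ g' t = 0 := by
  have hneg : Tendsto (fun τ : ℝ => -τ) (nhdsWithin (-s) (Set.Ioi (-s)))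
      (nhdsWithin s (Set.Iio s)) := by
    apply tendsto_nhdsWithin_of_tendsto_nhds_of_eventually_within
    · have : Tendsto (fun τ : ℝ => -τ) (nhds (-s)) (nhds s) := by
        simpa using (continuous_neg.tendsto (-s))
      exact this.mono_left nhdsWithin_le_nhds
    · filter_upwards [self_mem_nhdsWithin] with τ hτ
      simp only [Set.mem_Ioi] at hτ
      simp only [Set.mem_Iio]
      linarith
  have main := gron_right (g := fun τ => g (-τ)) (g' := fun τ => -g' (-τ))
    (q := fun τ => q (-τ)) (r := -s) (s := -r) (M := M)
    (fun τ hτ => by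
      have hmem : -τ ∈ Set.Ioo r s := by
        constructor <;> [skip; skip] <;> simp only [Set.mem_Ioo] at hτ <;> linarith [hτ.1, hτ.2]
      have := (hd (-τ) hmem).comp τ (hasDerivAt_neg τ)
      exact this.congr_deriv (by ring))
    (fun τ hτ => by
      have hmem : -τ ∈ Set.Ioo r s := by
        simp only [Set.mem_Ioo] at hτ ⊢; constructor <;> linarith [hτ.1, hτ.2]
      have := ((hd2 (-τ) hmem).comp τ (hasDerivAt_neg τ)).neg
      exact this.congr_deriv (by ring))
    (fun τ hτ => by
      have hmem : -τ ∈ Set.Ioo r s := by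
        simp only [Set.mem_Ioo] at hτ ⊢; constructor <;> linarith [hτ.1, hτ.2]
      exact hq (-τ) hmem)
    (h0.comp hneg)
    (by
      have := (h0'.comp hneg).neg
      rwa [neg_zero] at this)
  intro t ht
  have hmem : -t ∈ Set.Ioo (-s) (-r) := by
    simp only [Set.mem_Ioo] at ht ⊢; constructor <;> linarith [ht.1, ht.2]
  obtain ⟨h1, h2⟩ := main (-t) hmem
  simp only [neg_neg] at h1 h2
  exact ⟨h1, by linarith [h2]⟩

/-- **Uniqueness/propagation.** A solution of the δ-interaction equation vanishing to
second order at a non-interaction point vanishes identically. -/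
theorem DeltaODE.vanish {V : ℝ → ℝ} {lo hi M : ℝ} {ι : Type*} [Countable ι] {x : ι → ℝ}
    {cpl : ι → ℝ} {E : ℝ} {g g' : ℝ → ℝ}
    (h : DeltaODE V lo hi x cpl E g g')
    (hM : ∀ t ∈ Set.Ioo lo hi, |V t - E| ≤ M)
    (hfin : ∀ Kc : Set ℝ, IsCompact Kc → Kc ⊆ Set.Ioo lo hi → {n | x n ∈ Kc}.Finite)
    {p : ℝ} (hp : p ∈ Set.Ioo lo hi) (hpx : ∀ n, p ≠ x n)
    (h0 : g p = 0) (h0' : g' p = 0) :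
    ∀ t ∈ Set.Ioo lo hi, g t = 0 := by
  have hq : ∀ t ∈ Set.Ioo lo hi, |V t * g t - E * g t| ≤ M * |g t| := by
    intro t ht
    have : V t * g t - E * g t = (V t - E) * g t := by ring
    rw [this, abs_mul]
    exact mul_le_mul_of_nonneg_right (hM t ht) (abs_nonneg _)
  have gcont : ∀ t ∈ Set.Ioo lo hi, ContinuousAt g t := fun t ht => h.contAt ht
  have deriv_zero : ∀ e T : ℝ, Set.Ioo e T ⊆ Set.Ioo lo hi →
      (∀ t ∈ Set.Ioo e T, ∀ n, t ≠ x n) → (∀ t ∈ Set.Ioo e T, g t = 0) →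
      ∀ t ∈ Set.Ioo e T, g' t = 0 := by
    intro e T hsub hjf hvan t ht
    have hder := h.deriv t (hsub ht) (hjf t ht)
    have hev : (fun _ => (0:ℝ)) =ᶠ[nhds t] g := by
      filter_upwards [isOpen_Ioo.mem_nhds ht] with τ hτ
      exact (hvan τ hτ).symm
    have hz : HasDerivAt (fun _ => (0:ℝ)) (g' t) t := hder.congr_of_eventuallyEq hev
    exact (hz.unique (hasDerivAt_const t 0)).symm ▸ rfl
  -- extension to the right given vanishing limit data at T
  have extend : ∀ T, T ∈ Set.Ioo lo hi → Tendsto g (nhdsWithin T (Set.Ioi T)) (nhds 0) →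
      Tendsto g' (nhdsWithin T (Set.Ioi T)) (nhds 0) →
      ∃ τ, T < τ ∧ τ < hi ∧ ∀ t ∈ Set.Ioo T τ, g t = 0 := by
    intro T hT hg hg'
    obtain ⟨e, he1, he2, he3⟩ := jumpfree_right hfin hT
    have hsub : Set.Ioo T e ⊆ Set.Ioo lo hi := fun t ht =>
      ⟨lt_trans hT.1 ht.1, lt_trans ht.2 he2⟩
    have := gron_right (fun t ht => h.deriv t (hsub ht) (he3 t ht))
      (fun t ht => h.ode t (hsub ht) (he3 t ht)) (fun t ht => hq t (hsub ht)) hg hg'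
    exact ⟨e, he1, he2, fun t ht => (this t ht).1⟩
  have extendL : ∀ T, T ∈ Set.Ioo lo hi → Tendsto g (nhdsWithin T (Set.Iio T)) (nhds 0) →
      Tendsto g' (nhdsWithin T (Set.Iio T)) (nhds 0) →
      ∃ τ, lo < τ ∧ τ < T ∧ ∀ t ∈ Set.Ioo τ T, g t = 0 := by
    intro T hT hg hg'
    obtain ⟨e, he1, he2, he3⟩ := jumpfree_left hfin hT
    have hsub : Set.Ioo e T ⊆ Set.Ioo lo hi := fun t ht =>
      ⟨lt_trans he1 ht.1, lt_trans ht.2 hT.2⟩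
    have := gron_left (fun t ht => h.deriv t (hsub ht) (he3 t ht))
      (fun t ht => h.ode t (hsub ht) (he3 t ht)) (fun t ht => hq t (hsub ht)) hg hg'
    exact ⟨e, he1, he2, fun t ht => (this t ht).1⟩
  -- data for the forward induction
  have dataR : ∀ T, T ∈ Set.Ioo lo hi → p ≤ T → (∀ t, p ≤ t → t < T → g t = 0) →
      g T = 0 ∧ Tendsto g (nhdsWithin T (Set.Ioi T)) (nhds 0) ∧
        Tendsto g' (nhdsWithin T (Set.Ioi T)) (nhds 0) := by
    intro T hTIoo hpT hvan
    rcases eq_or_lt_of_le hpT with heq | hlt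
    · subst heq
      have h1 : ContinuousAt g p := gcont p hTIoo
      have h2 : ContinuousAt g' p := (h.ode p hTIoo hpx).continuousAt
      exact ⟨h0, h0 ▸ h1.continuousWithinAt, h0' ▸ h2.continuousWithinAt⟩
    · obtain ⟨e, he1, he2, he3⟩ := jumpfree_left hfin hTIoo
      set e' := max e p with he'def
      have he'T : e' < T := max_lt he2 hlt
      have hsub' : Set.Ioo e' T ⊆ Set.Ioo lo hi := fun t ht =>
        ⟨lt_of_lt_of_le hp.1 (le_trans (le_max_right e p) (le_of_lt ht.1)), lt_trans ht.2 hTIoo.2⟩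
      have hjf' : ∀ t ∈ Set.Ioo e' T, ∀ k, t ≠ x k := fun t ht =>
        he3 t ⟨lt_of_le_of_lt (le_max_left e p) ht.1, ht.2⟩
      have hvan' : ∀ t ∈ Set.Ioo e' T, g t = 0 := fun t ht =>
        hvan t (le_trans (le_max_right e p) (le_of_lt ht.1)) ht.2
      have hg'0 : ∀ t ∈ Set.Ioo e' T, g' t = 0 := deriv_zero e' T hsub' hjf' hvan'
      have hIoo_mem : Set.Ioo e' T ∈ nhdsWithin T (Set.Iio T) :=
        Ioo_mem_nhdsLT_of_mem ⟨he'T, le_refl T⟩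
      have hgL : Tendsto g (nhdsWithin T (Set.Iio T)) (nhds 0) := by
        refine tendsto_const_nhds.congr' ?_
        filter_upwards [hIoo_mem] with t ht
        exact (hvan' t ht).symm
      have hg'L : Tendsto g' (nhdsWithin T (Set.Iio T)) (nhds 0) := by
        refine tendsto_const_nhds.congr' ?_
        filter_upwards [hIoo_mem] with t ht
        exact (hg'0 t ht).symm
      have hgT : g T = 0 := by
        have h1 : Tendsto g (nhdsWithin T (Set.Iio T)) (nhds (g T)) :=
          (gcont T hTIoo).continuousWithinAt
        exact tendsto_nhds_unique h1 hgL
      by_cases hTx : ∃ n, T = x n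
      · obtain ⟨n, hTn⟩ := hTx
        have hxT : x n = T := hTn.symm
        have hnIoo : x n ∈ Set.Ioo lo hi := hxT ▸ hTIoo
        obtain ⟨dm, hdm, hjmp⟩ := h.jump n hnIoo
        rw [hxT] at hdm hjmp
        have hdm0 : dm = 0 := tendsto_nhds_unique hdm hg'L
        have hg'T : g' T = 0 := by rw [hdm0, hgT] at hjmp; linarith
        have hcr := h.contR n hnIoo
        have hdr := h.derivR n hnIoo
        rw [hxT] at hcr hdr
        exact ⟨hgT, hgT ▸ hcr, hg'T ▸ hdr⟩
      · push_neg at hTx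
        have h1 : ContinuousAt g T := gcont T hTIoo
        have h2 : ContinuousAt g' T := (h.ode T hTIoo hTx).continuousAt
        have hg'T : g' T = 0 := tendsto_nhds_unique h2.continuousWithinAt hg'L
        exact ⟨hgT, hgT ▸ h1.continuousWithinAt, hg'T ▸ h2.continuousWithinAt⟩
  -- data for the backward induction
  have dataL : ∀ T, T ∈ Set.Ioo lo hi → T ≤ p → (∀ t, T < t → t ≤ p → g t = 0) →
      g T = 0 ∧ Tendsto g (nhdsWithin T (Set.Iio T)) (nhds 0) ∧
        Tendsto g' (nhdsWithin T (Set.Iio T)) (nhds 0) := by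
    intro T hTIoo hpT hvan
    rcases eq_or_lt_of_le hpT with heq | hlt
    · subst heq
      have h1 : ContinuousAt g T := gcont T hTIoo
      have h2 : ContinuousAt g' T := (h.ode T hTIoo hpx).continuousAt
      exact ⟨h0, h0 ▸ h1.continuousWithinAt, h0' ▸ h2.continuousWithinAt⟩
    · obtain ⟨e, he1, he2, he3⟩ := jumpfree_right hfin hTIoo
      set e' := min e p with he'def
      have he'T : T < e' := lt_min he1 hlt
      have hsub' : Set.Ioo T e' ⊆ Set.Ioo lo hi := fun t ht =>
        ⟨lt_trans hTIoo.1 ht.1,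
          lt_of_lt_of_le ht.2 (le_trans (min_le_right e p) (le_of_lt hp.2))⟩
      have hjf' : ∀ t ∈ Set.Ioo T e', ∀ k, t ≠ x k := fun t ht =>
        he3 t ⟨ht.1, lt_of_lt_of_le ht.2 (min_le_left e p)⟩
      have hvan' : ∀ t ∈ Set.Ioo T e', g t = 0 := fun t ht =>
        hvan t ht.1 (le_trans (le_of_lt ht.2) (min_le_right e p))
      have hg'0 : ∀ t ∈ Set.Ioo T e', g' t = 0 := deriv_zero T e' hsub' hjf' hvan'
      have hIoo_mem : Set.Ioo T e' ∈ nhdsWithin T (Set.Ioi T) :=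
        Ioo_mem_nhdsGT_of_mem ⟨le_refl T, he'T⟩
      have hgR : Tendsto g (nhdsWithin T (Set.Ioi T)) (nhds 0) := by
        refine tendsto_const_nhds.congr' ?_
        filter_upwards [hIoo_mem] with t ht
        exact (hvan' t ht).symm
      have hg'R : Tendsto g' (nhdsWithin T (Set.Ioi T)) (nhds 0) := by
        refine tendsto_const_nhds.congr' ?_
        filter_upwards [hIoo_mem] with t ht
        exact (hg'0 t ht).symm
      by_cases hTx : ∃ n, T = x n
      · obtain ⟨n, hTn⟩ := hTx
        have hxT : x n = T := hTn.symm
        have hnIoo : x n ∈ Set.Ioo lo hi := hxT ▸ hTIoo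
        obtain ⟨dm, hdm, hjmp⟩ := h.jump n hnIoo
        have hcr := h.contR n hnIoo
        have hdr := h.derivR n hnIoo
        have hcl := h.contL n hnIoo
        rw [hxT] at hdm hjmp hcr hdr hcl
        have hgT : g T = 0 := tendsto_nhds_unique hcr hgR
        have hg'T : g' T = 0 := tendsto_nhds_unique hdr hg'R
        have hdm0 : dm = 0 := by rw [hg'T, hgT] at hjmp; linarith
        exact ⟨hgT, hgT ▸ hcl, hdm0 ▸ hdm⟩
      · push_neg at hTx
        have h1 : ContinuousAt g T := gcont T hTIoo
        have h2 : ContinuousAt g' T := (h.ode T hTIoo hTx).continuousAt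
        have hgT : g T = 0 := tendsto_nhds_unique h1.continuousWithinAt hgR
        have hg'T : g' T = 0 := tendsto_nhds_unique h2.continuousWithinAt hg'R
        exact ⟨hgT, hgT ▸ h1.continuousWithinAt, hg'T ▸ h2.continuousWithinAt⟩
  -- forward sweep
  have forward : ∀ T ∈ Set.Ioo lo hi, p ≤ T → g T = 0 := by
    set A := {τ | τ ∈ Set.Icc p hi ∧ ∀ t ∈ Set.Icc p τ, g t = 0} with hA
    have hpA : p ∈ A := ⟨⟨le_refl p, le_of_lt hp.2⟩, by
      intro t ht
      have : t = p := le_antisymm ht.2 ht.1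
      rw [this]; exact h0⟩
    have hbdd : BddAbove A := ⟨hi, fun τ hτ => hτ.1.2⟩
    set T := sSup A with hT
    have hT1 : p ≤ T := le_csSup hbdd hpA
    have hT2 : T ≤ hi := csSup_le ⟨p, hpA⟩ fun τ hτ => hτ.1.2
    have hvan : ∀ t, p ≤ t → t < T → g t = 0 := by
      intro t htp htT
      obtain ⟨τ, hτA, hτt⟩ := exists_lt_of_lt_csSup ⟨p, hpA⟩ htT
      exact hτA.2 t ⟨htp, le_of_lt hτt⟩
    have hTmax : ¬ T < hi := by
      intro hTh
      have hTIoo : T ∈ Set.Ioo lo hi := ⟨lt_of_lt_of_le hp.1 hT1, hTh⟩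
      obtain ⟨hgT, htg, htg'⟩ := dataR T hTIoo hT1 hvan
      obtain ⟨τ, hτ1, hτ2, hτ3⟩ := extend T hTIoo htg htg'
      set τ' := (T + τ)/2 with hτ'def
      have hτ'1 : T < τ' := by simp only [hτ'def]; linarith
      have hτ'2 : τ' < τ := by simp only [hτ'def]; linarith
      have hτ'A : τ' ∈ A := by
        refine ⟨⟨le_trans hT1 (le_of_lt hτ'1), le_of_lt (lt_trans hτ'2 hτ2)⟩, ?_⟩
        intro t ht
        rcases lt_trichotomy t T with hc | hc | hc
        · exact hvan t ht.1 hc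
        · rw [hc]; exact hgT
        · exact hτ3 t ⟨hc, lt_of_le_of_lt ht.2 hτ'2⟩
      have := le_csSup hbdd hτ'A
      simp only [← hT] at this
      linarith
    have hThi : T = hi := le_antisymm hT2 (not_lt.mp hTmax)
    intro T0 hT0 hpT0
    exact hvan T0 hpT0 (hThi ▸ hT0.2)
  -- backward sweep
  have backward : ∀ T ∈ Set.Ioo lo hi, T ≤ p → g T = 0 := by
    set A := {τ | τ ∈ Set.Icc lo p ∧ ∀ t ∈ Set.Icc τ p, g t = 0} with hA
    have hpA : p ∈ A := ⟨⟨le_of_lt hp.1, le_refl p⟩, by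
      intro t ht
      have : t = p := le_antisymm ht.2 ht.1
      rw [this]; exact h0⟩
    have hbdd : BddBelow A := ⟨lo, fun τ hτ => hτ.1.1⟩
    set T := sInf A with hT
    have hT1 : T ≤ p := csInf_le hbdd hpA
    have hT2 : lo ≤ T := le_csInf ⟨p, hpA⟩ fun τ hτ => hτ.1.1
    have hvan : ∀ t, T < t → t ≤ p → g t = 0 := by
      intro t htT htp
      obtain ⟨τ, hτA, hτt⟩ := exists_lt_of_csInf_lt ⟨p, hpA⟩ htT
      exact hτA.2 t ⟨le_of_lt hτt, htp⟩
    have hTmin : ¬ lo < T := by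
      intro hTh
      have hTIoo : T ∈ Set.Ioo lo hi := ⟨hTh, lt_of_le_of_lt hT1 hp.2⟩
      obtain ⟨hgT, htg, htg'⟩ := dataL T hTIoo hT1 hvan
      obtain ⟨τ, hτ1, hτ2, hτ3⟩ := extendL T hTIoo htg htg'
      set τ' := (τ + T)/2 with hτ'def
      have hτ'1 : τ' < T := by simp only [hτ'def]; linarith
      have hτ'2 : τ < τ' := by simp only [hτ'def]; linarith
      have hτ'A : τ' ∈ A := by
        refine ⟨⟨le_of_lt (lt_trans hτ1 hτ'2), le_trans (le_of_lt hτ'1) hT1⟩, ?_⟩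
        intro t ht
        rcases lt_trichotomy t T with hc | hc | hc
        · exact hτ3 t ⟨lt_of_lt_of_le hτ'2 ht.1, hc⟩
        · rw [hc]; exact hgT
        · exact hvan t hc ht.2
      have := csInf_le hbdd hτ'A
      simp only [← hT] at this
      linarith
    have hTlo : T = lo := le_antisymm (not_lt.mp hTmin) hT2
    intro T0 hT0 hpT0
    exact hvan T0 (hTlo ▸ hT0.1) hpT0
  intro t ht
  rcases le_total t p with hc | hc
  · exact backward t ht hc
  · exact forward t ht hc

/-- Gluing: a continuous function with zero derivative off the locally finite set of
interaction points is constant on the interval. -/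
lemma glue_const {ι : Type*} [Countable ι] {x : ι → ℝ} {lo hi : ℝ} {W : ℝ → ℝ}
    (hfin : ∀ Kc : Set ℝ, IsCompact Kc → Kc ⊆ Set.Ioo lo hi → {n | x n ∈ Kc}.Finite)
    (hc : ∀ t ∈ Set.Ioo lo hi, ContinuousAt W t)
    (hd : ∀ t ∈ Set.Ioo lo hi, (∀ n, t ≠ x n) → HasDerivAt W 0 t) :
    ∀ s ∈ Set.Ioo lo hi, ∀ t ∈ Set.Ioo lo hi, W s = W t := by
  -- enough to treat the ordered case
  suffices H : ∀ s ∈ Set.Ioo lo hi, ∀ t ∈ Set.Ioo lo hi, s ≤ t → W s = W t by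
    intro s hs t ht
    rcases le_total s t with hc' | hc'
    · exact H s hs t ht hc'
    · exact (H t ht s hs hc').symm
  intro s hs t ht hst
  rcases eq_or_lt_of_le hst with rfl | hlt
  · rfl
  set A := {τ | τ ∈ Set.Icc s t ∧ ∀ r ∈ Set.Icc s τ, W r = W s} with hA
  have hsA : s ∈ A := ⟨⟨le_refl s, le_of_lt hlt⟩, fun r hr => by
    have : r = s := le_antisymm hr.2 hr.1
    rw [this]⟩
  have hbdd : BddAbove A := ⟨t, fun τ hτ => hτ.1.2⟩
  set T := sSup A with hT
  have hT1 : s ≤ T := le_csSup hbdd hsA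
  have hT2 : T ≤ t := csSup_le ⟨s, hsA⟩ fun τ hτ => hτ.1.2
  have hTIoo : T ∈ Set.Ioo lo hi := ⟨lt_of_lt_of_le hs.1 hT1, lt_of_le_of_lt hT2 ht.2⟩
  have hvan : ∀ r, s ≤ r → r < T → W r = W s := by
    intro r hrs hrT
    obtain ⟨τ, hτA, hτr⟩ := exists_lt_of_lt_csSup ⟨s, hsA⟩ hrT
    exact hτA.2 r ⟨hrs, le_of_lt hτr⟩
  have hWT : W T = W s := by
    rcases eq_or_lt_of_le hT1 with heq | hlt'
    · rw [← heq]
    · have h1 : Tendsto W (nhdsWithin T (Set.Iio T)) (nhds (W T)) :=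
        (hc T hTIoo).continuousWithinAt
      have h2 : Tendsto W (nhdsWithin T (Set.Iio T)) (nhds (W s)) := by
        refine tendsto_const_nhds.congr' ?_
        filter_upwards [Ioo_mem_nhdsLT_of_mem (Set.mem_Ioc.mpr ⟨hlt', le_refl T⟩)] with r hr
        exact (hvan r (le_of_lt hr.1) hr.2).symm
      exact tendsto_nhds_unique h1 h2
  -- maximality: T = t
  have hTmax : ¬ T < t := by
    intro hTt
    obtain ⟨e, he1, he2, he3⟩ := jumpfree_right (x := x) hfin hTIoo
    set e' := min e t with he'def
    have hTe' : T < e' := lt_min he1 hTt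
    have hsub : Set.Ioo T e' ⊆ Set.Ioo lo hi := fun r hr =>
      ⟨lt_trans hTIoo.1 hr.1, lt_of_lt_of_le hr.2 (le_trans (min_le_right e t) (le_of_lt ht.2))⟩
    -- W is constant on (T, e')
    have hconst : ∀ r ∈ Set.Ioo T e', W r = W T := by
      intro r hr
      -- on any [d, r] ⊆ (T, e') the derivative vanishes
      have key : ∀ d ∈ Set.Ioo T r, W r = W d := by
        intro d hdm
        have hIccsub : Set.Icc d r ⊆ Set.Ioo T e' := fun z hz =>
          ⟨lt_of_lt_of_le hdm.1 hz.1, lt_of_le_of_lt hz.2 hr.2⟩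
        have hcont : ContinuousOn W (Set.Icc d r) := fun z hz =>
          (hc z (hsub (hIccsub hz))).continuousWithinAt
        have hder : ∀ z ∈ Set.Ico d r, HasDerivWithinAt W 0 (Set.Ici z) z := by
          intro z hz
          have hz' : z ∈ Set.Ioo T e' := hIccsub ⟨hz.1, le_of_lt hz.2⟩
          exact (hd z (hsub hz') (he3 z ⟨hz'.1, lt_of_lt_of_le hz'.2 (min_le_left e t)⟩)).hasDerivWithinAt
        have := constant_of_has_deriv_right_zero hcont hder r ⟨le_of_lt hdm.2, le_refl r⟩
        exact this
      -- let d → T⁺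
      have h1 : Tendsto W (nhdsWithin T (Set.Ioi T)) (nhds (W T)) :=
        (hc T hTIoo).continuousWithinAt
      have h2 : Tendsto W (nhdsWithin T (Set.Ioi T)) (nhds (W r)) := by
        refine tendsto_const_nhds.congr' ?_
        filter_upwards [Ioo_mem_nhdsGT_of_mem (Set.mem_Ico.mpr ⟨le_refl T, hr.1⟩)] with d hdm
        exact key d hdm
      exact tendsto_nhds_unique h2 h1
    set τ' := (T + e')/2 with hτ'def
    have hτ'1 : T < τ' := by simp only [hτ'def]; linarith
    have hτ'2 : τ' < e' := by simp only [hτ'def]; linarith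
    have hτ'A : τ' ∈ A := by
      refine ⟨⟨le_trans hT1 (le_of_lt hτ'1), le_of_lt (lt_of_lt_of_le hτ'2 (min_le_right e t))⟩, ?_⟩
      intro r hr
      rcases lt_trichotomy r T with hcc | hcc | hcc
      · exact hvan r hr.1 hcc
      · rw [hcc]; exact hWT
      · rw [hconst r ⟨hcc, lt_of_le_of_lt hr.2 hτ'2⟩, hWT]
    have := le_csSup hbdd hτ'A
    simp only [← hT] at this
    linarith
  have : T = t := le_antisymm hT2 (not_lt.mp hTmax)
  rw [← this, hWT]

/-- The (modified) Wronskian of two solutions with the same couplings is constant. -/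
lemma wronskian_const {V : ℝ → ℝ} {lo hi : ℝ} {ι : Type*} [Countable ι] {x : ι → ℝ} {cpl : ι → ℝ}
    {E : ℝ} {u u' v v' : ℝ → ℝ}
    (hu : DeltaODE V lo hi x cpl E u u') (hv : DeltaODE V lo hi x cpl E v v')
    (hfin : ∀ Kc : Set ℝ, IsCompact Kc → Kc ⊆ Set.Ioo lo hi → {n | x n ∈ Kc}.Finite) :
    ∀ s ∈ Set.Ioo lo hi, ∀ t ∈ Set.Ioo lo hi,
      u s * v' s - u' s * v s = u t * v' t - u' t * v t := by
  have := glue_const (x := x) (W := fun τ => u τ * v' τ - u' τ * v τ) hfin ?_ ?_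
  · exact this
  · -- continuity
    intro t ht
    by_cases htx : ∃ n, t = x n
    · obtain ⟨n, rfl⟩ := htx
      obtain ⟨dmu, hdmu, hju⟩ := hu.jump n ht
      obtain ⟨dmv, hdmv, hjv⟩ := hv.jump n ht
      have hR : ContinuousWithinAt (fun τ => u τ * v' τ - u' τ * v τ) (Set.Ioi (x n)) (x n) :=
        ((hu.contR n ht).mul (hv.derivR n ht)).sub ((hu.derivR n ht).mul (hv.contR n ht))
      have hLlim : Tendsto (fun τ => u τ * v' τ - u' τ * v τ)
          (nhdsWithin (x n) (Set.Iio (x n)))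
          (nhds (u (x n) * dmv - dmu * v (x n))) :=
        ((hu.contL n ht).mul hdmv).sub (hdmu.mul (hv.contL n ht))
      have hval : u (x n) * dmv - dmu * v (x n)
          = u (x n) * v' (x n) - u' (x n) * v (x n) := by
        linear_combination (v (x n)) * hju - (u (x n)) * hjv
      have hL : ContinuousWithinAt (fun τ => u τ * v' τ - u' τ * v τ) (Set.Iio (x n)) (x n) := by
        rw [ContinuousWithinAt]
        rw [← hval]
        exact hLlim
      have := hL.union hR
      rw [Set.Iio_union_Ioi] at this
      exact continuousWithinAt_compl_self.mp this
    · push_neg at htx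
      exact (((hu.deriv t ht htx).continuousAt.mul (hv.ode t ht htx).continuousAt).sub
        ((hu.ode t ht htx).continuousAt.mul (hv.deriv t ht htx).continuousAt))
  · -- zero derivative
    intro t ht htx
    have hW := ((hu.deriv t ht htx).mul (hv.ode t ht htx)).sub
      ((hu.ode t ht htx).mul (hv.deriv t ht htx))
    exact hW.congr_deriv (by ring)


lemma bc_det {ua ua' va va' cθ sθ : ℝ} (hpy : cθ^2 + sθ^2 = 1)
    (h1 : ua * cθ + ua' * sθ = 0) (h2 : va * cθ + va' * sθ = 0) :
    ua * va' - ua' * va = 0 := by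
  linear_combination (cθ * va' - sθ * va) * h1 + (sθ * ua - cθ * ua') * h2
    - (ua * va' - ua' * va) * hpy

/-- **Key rigidity lemma.** Two eigenfunction witnesses whose couplings differ exactly
at coordinate `k` must have `u (x k) * v (x k) = 0`. -/
lemma coupling_vanish
    {ι : Type} [Countable ι] {V : ℝ → ℝ} {a b : ℝ} {x : ι → ℝ} {bca bcb : Option ℝ} {E : ℝ}
    (hab : a < b) (hx : ∀ n, x n ∈ Set.Ioo a b)
    (hdisc : ∀ Kc : Set ℝ, IsCompact Kc → Kc ⊆ Set.Ioo a b → {n | x n ∈ Kc}.Finite)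
    (hlpa : bca = none → ∀ (ω : ι → ℝ) (lam : ℝ), ∃ f f' : ℝ → ℝ,
      DeltaODE V a b x ω lam f f' ∧ (∃ t ∈ Set.Ioo a b, f t ≠ 0) ∧
      ∀ c ∈ Set.Ioo a b, ¬ MemLp f 2 (volume.restrict (Set.Ioo a c)))
    (hlpb : bcb = none → ∀ (ω : ι → ℝ) (lam : ℝ), ∃ f f' : ℝ → ℝ,
      DeltaODE V a b x ω lam f f' ∧ (∃ t ∈ Set.Ioo a b, f t ≠ 0) ∧
      ∀ c ∈ Set.Ioo a b, ¬ MemLp f 2 (volume.restrict (Set.Ioo c b)))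
    {K : ℝ} (hK : ∀ t ∈ Set.Ioo a b, |V t| ≤ K)
    {k : ι} {ω₁ ω₂ : ι → ℝ} (hagree : ∀ j, j ≠ k → ω₁ j = ω₂ j) (hne : ω₁ k ≠ ω₂ k)
    {u u' v v' : ℝ → ℝ}
    (hu : EigWit V a b x ω₁ bca bcb E u u') (hv : EigWit V a b x ω₂ bca bcb E v v') :
    u (x k) * v (x k) = 0 := by
  set M := K + |E| with hMdef
  have hM : ∀ t ∈ Set.Ioo a b, |V t - E| ≤ M := by
    intro t ht
    calc |V t - E| ≤ |V t| + |E| := abs_sub _ _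
      _ ≤ K + |E| := by linarith [hK t ht]
  have hxk : x k ∈ Set.Ioo a b := hx k
  -- ===== left interval (a, x k) =====
  have hsubL : Set.Ioo a (x k) ⊆ Set.Ioo a b := fun t ht => ⟨ht.1, lt_trans ht.2 hxk.2⟩
  have hfinL : ∀ Kc : Set ℝ, IsCompact Kc → Kc ⊆ Set.Ioo a (x k) → {n | x n ∈ Kc}.Finite :=
    fun Kc hc hs => hdisc Kc hc (hs.trans hsubL)
  have huL : DeltaODE V a (x k) x ω₁ E u u' := hu.sol.restrict hsubL
  have hvL : DeltaODE V a (x k) x ω₁ E v v' := by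
    refine (hv.sol.restrict hsubL).congr_cpl ?_
    intro j hj
    refine hagree j ?_
    intro hjk
    subst hjk
    exact lt_irrefl _ hj.2
  have ht₀ : (a + x k)/2 ∈ Set.Ioo a (x k) := ⟨by linarith [hxk.1], by linarith [hxk.1]⟩
  set t₀ := (a + x k)/2 with ht₀def
  set wL := u t₀ * v' t₀ - u' t₀ * v t₀ with hwLdef
  have hWL : ∀ t ∈ Set.Ioo a (x k), u t * v' t - u' t * v t = wL :=
    fun t ht => wronskian_const huL hvL hfinL t ht t₀ ht₀
  have claimL : wL = 0 := by
    cases hbca : bca with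
    | some θ =>
      obtain ⟨hcu, hcu', hbu⟩ := hu.bc_a θ (by rw [hbca]; rfl)
      obtain ⟨hcv, hcv', hbv⟩ := hv.bc_a θ (by rw [hbca]; rfl)
      have hWa : Tendsto (fun t => u t * v' t - u' t * v t) (nhdsWithin a (Set.Ioi a))
          (nhds (u a * v' a - u' a * v a)) :=
        (((hcu.mono Set.Ioi_subset_Ici_self).mul (hcv'.mono Set.Ioi_subset_Ici_self)).sub
          ((hcu'.mono Set.Ioi_subset_Ici_self).mul (hcv.mono Set.Ioi_subset_Ici_self)))
      have hWc : Tendsto (fun t => u t * v' t - u' t * v t) (nhdsWithin a (Set.Ioi a))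
          (nhds wL) := by
        refine tendsto_const_nhds.congr' ?_
        filter_upwards [Ioo_mem_nhdsGT_of_mem (Set.mem_Ico.mpr ⟨le_refl a, ht₀.1⟩)] with t ht
        exact (hWL t ⟨ht.1, lt_trans ht.2 ht₀.2⟩).symm
      have := tendsto_nhds_unique hWc hWa
      rw [this]
      exact bc_det (Real.cos_sq_add_sin_sq θ) hbu hbv
    | none =>
      obtain ⟨f, f', hf, -, hfL2⟩ := hlpa hbca ω₁ E
      by_contra hwL0
      obtain ⟨p, hp, hpx⟩ := exists_noninteraction (x := x) hxk.1
      have hWp : u p * v' p - u' p * v p = wL := hWL p hp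
      set α := (f p * v' p - f' p * v p) / wL with hαdef
      set β := (u p * f' p - u' p * f p) / wL with hβdef
      have hfL : DeltaODE V a (x k) x ω₁ E f f' := hf.restrict hsubL
      have huv : DeltaODE V a (x k) x ω₁ E (fun t => α * u t + β * v t)
          (fun t => α * u' t + β * v' t) := huL.comb hvL α β
      have hg : DeltaODE V a (x k) x ω₁ E
          (fun t => f t - (α * u t + β * v t)) (fun t => f' t - (α * u' t + β * v' t)) := by
        refine (hfL.comb huv 1 (-1)).congr_fun (fun t => by ring) (fun t => by ring)
      have expand1 : α * u p + β * v p = f p := by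
        have h1 : α * u p + β * v p
            = (f p * (u p * v' p - u' p * v p)) / wL := by
          rw [hαdef, hβdef]; ring
        rw [h1, hWp, mul_div_assoc, div_self hwL0, mul_one]
      have expand2 : α * u' p + β * v' p = f' p := by
        have h1 : α * u' p + β * v' p
            = (f' p * (u p * v' p - u' p * v p)) / wL := by
          rw [hαdef, hβdef]; ring
        rw [h1, hWp, mul_div_assoc, div_self hwL0, mul_one]
      have hg0 : f p - (α * u p + β * v p) = 0 := by rw [expand1]; ring
      have hg0' : f' p - (α * u' p + β * v' p) = 0 := by rw [expand2]; ring
      have hvan := hg.vanish (fun t ht => hM t (hsubL ht)) hfinL hp hpx hg0 hg0'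
      have hpab : p ∈ Set.Ioo a b := hsubL hp
      have hmem : MemLp (fun t => α * u t + β * v t) 2 (volume.restrict (Set.Ioo a p)) := by
        have hle : volume.restrict (Set.Ioo a p) ≤ volume.restrict (Set.Ioo a b) :=
          Measure.restrict_mono (Set.Ioo_subset_Ioo_right (le_of_lt hpab.2)) le_rfl
        have h1 := (hu.sq.mono_measure hle).const_mul α
        have h2 := (hv.sq.mono_measure hle).const_mul β
        have := h1.add h2
        exact (memLp_congr_ae (Filter.EventuallyEq.refl _ _)).mp this
      have hfmem : MemLp f 2 (volume.restrict (Set.Ioo a p)) := by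
        refine (memLp_congr_ae ?_).mpr hmem
        filter_upwards [self_mem_ae_restrict measurableSet_Ioo] with t ht
        have := hvan t ⟨ht.1, lt_trans ht.2 hp.2⟩
        linarith
      exact hfL2 p hpab hfmem
  -- ===== right interval (x k, b) =====
  have hsubR : Set.Ioo (x k) b ⊆ Set.Ioo a b := fun t ht => ⟨lt_trans hxk.1 ht.1, ht.2⟩
  have hfinR : ∀ Kc : Set ℝ, IsCompact Kc → Kc ⊆ Set.Ioo (x k) b → {n | x n ∈ Kc}.Finite :=
    fun Kc hc hs => hdisc Kc hc (hs.trans hsubR)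
  have huR : DeltaODE V (x k) b x ω₁ E u u' := hu.sol.restrict hsubR
  have hvR : DeltaODE V (x k) b x ω₁ E v v' := by
    refine (hv.sol.restrict hsubR).congr_cpl ?_
    intro j hj
    refine hagree j ?_
    intro hjk
    subst hjk
    exact lt_irrefl _ hj.1
  have ht₁ : (x k + b)/2 ∈ Set.Ioo (x k) b := ⟨by linarith [hxk.2], by linarith [hxk.2]⟩
  set t₁ := (x k + b)/2 with ht₁def
  set wR := u t₁ * v' t₁ - u' t₁ * v t₁ with hwRdef
  have hWR : ∀ t ∈ Set.Ioo (x k) b, u t * v' t - u' t * v t = wR :=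
    fun t ht => wronskian_const huR hvR hfinR t ht t₁ ht₁
  have claimR : wR = 0 := by
    cases hbcb : bcb with
    | some γ =>
      obtain ⟨hcu, hcu', hbu⟩ := hu.bc_b γ (by rw [hbcb]; rfl)
      obtain ⟨hcv, hcv', hbv⟩ := hv.bc_b γ (by rw [hbcb]; rfl)
      have hWb : Tendsto (fun t => u t * v' t - u' t * v t) (nhdsWithin b (Set.Iio b))
          (nhds (u b * v' b - u' b * v b)) :=
        (((hcu.mono Set.Iio_subset_Iic_self).mul (hcv'.mono Set.Iio_subset_Iic_self)).sub
          ((hcu'.mono Set.Iio_subset_Iic_self).mul (hcv.mono Set.Iio_subset_Iic_self)))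
      have hWc : Tendsto (fun t => u t * v' t - u' t * v t) (nhdsWithin b (Set.Iio b))
          (nhds wR) := by
        refine tendsto_const_nhds.congr' ?_
        filter_upwards [Ioo_mem_nhdsLT_of_mem (Set.mem_Ioc.mpr ⟨ht₁.2, le_refl b⟩)] with t ht
        exact (hWR t ⟨lt_trans ht₁.1 ht.1, ht.2⟩).symm
      have := tendsto_nhds_unique hWc hWb
      rw [this]
      exact bc_det (Real.cos_sq_add_sin_sq γ) hbu hbv
    | none =>
      obtain ⟨f, f', hf, -, hfL2⟩ := hlpb hbcb ω₁ E
      by_contra hwR0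
      obtain ⟨p, hp, hpx⟩ := exists_noninteraction (x := x) hxk.2
      have hWp : u p * v' p - u' p * v p = wR := hWR p hp
      set α := (f p * v' p - f' p * v p) / wR with hαdef
      set β := (u p * f' p - u' p * f p) / wR with hβdef
      have hfR : DeltaODE V (x k) b x ω₁ E f f' := hf.restrict hsubR
      have huv : DeltaODE V (x k) b x ω₁ E (fun t => α * u t + β * v t)
          (fun t => α * u' t + β * v' t) := huR.comb hvR α β
      have hg : DeltaODE V (x k) b x ω₁ E
          (fun t => f t - (α * u t + β * v t)) (fun t => f' t - (α * u' t + β * v' t)) := by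
        refine (hfR.comb huv 1 (-1)).congr_fun (fun t => by ring) (fun t => by ring)
      have expand1 : α * u p + β * v p = f p := by
        have h1 : α * u p + β * v p
            = (f p * (u p * v' p - u' p * v p)) / wR := by
          rw [hαdef, hβdef]; ring
        rw [h1, hWp, mul_div_assoc, div_self hwR0, mul_one]
      have expand2 : α * u' p + β * v' p = f' p := by
        have h1 : α * u' p + β * v' p
            = (f' p * (u p * v' p - u' p * v p)) / wR := by
          rw [hαdef, hβdef]; ring
        rw [h1, hWp, mul_div_assoc, div_self hwR0, mul_one]
      have hg0 : f p - (α * u p + β * v p) = 0 := by rw [expand1]; ring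
      have hg0' : f' p - (α * u' p + β * v' p) = 0 := by rw [expand2]; ring
      have hvan := hg.vanish (fun t ht => hM t (hsubR ht)) hfinR hp hpx hg0 hg0'
      have hpab : p ∈ Set.Ioo a b := hsubR hp
      have hmem : MemLp (fun t => α * u t + β * v t) 2 (volume.restrict (Set.Ioo p b)) := by
        have hle : volume.restrict (Set.Ioo p b) ≤ volume.restrict (Set.Ioo a b) :=
          Measure.restrict_mono (Set.Ioo_subset_Ioo_left (le_of_lt hpab.1)) le_rfl
        have h1 := (hu.sq.mono_measure hle).const_mul α
        have h2 := (hv.sq.mono_measure hle).const_mul β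
        have := h1.add h2
        exact (memLp_congr_ae (Filter.EventuallyEq.refl _ _)).mp this
      have hfmem : MemLp f 2 (volume.restrict (Set.Ioo p b)) := by
        refine (memLp_congr_ae ?_).mpr hmem
        filter_upwards [self_mem_ae_restrict measurableSet_Ioo] with t ht
        have := hvan t ⟨lt_trans hp.1 ht.1, ht.2⟩
        linarith
      exact hfL2 p hpab hfmem
  -- ===== combine at x k =====
  obtain ⟨dmu, hdmu, eju⟩ := hu.sol.jump k hxk
  obtain ⟨dmv, hdmv, ejv⟩ := hv.sol.jump k hxk
  have eL : u (x k) * dmv - dmu * v (x k) = 0 := by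
    have h1 : Tendsto (fun t => u t * v' t - u' t * v t) (nhdsWithin (x k) (Set.Iio (x k)))
        (nhds (u (x k) * dmv - dmu * v (x k))) :=
      ((hu.sol.contL k hxk).mul hdmv).sub (hdmu.mul (hv.sol.contL k hxk))
    have h2 : Tendsto (fun t => u t * v' t - u' t * v t) (nhdsWithin (x k) (Set.Iio (x k)))
        (nhds 0) := by
      refine tendsto_const_nhds.congr' ?_
      filter_upwards [Ioo_mem_nhdsLT_of_mem (Set.mem_Ioc.mpr ⟨ht₀.2, le_refl (x k)⟩)] with t ht
      rw [hWL t ⟨lt_trans ht₀.1 ht.1, ht.2⟩, claimL]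
    exact tendsto_nhds_unique h1 h2
  have eR : u (x k) * v' (x k) - u' (x k) * v (x k) = 0 := by
    have h1 : Tendsto (fun t => u t * v' t - u' t * v t) (nhdsWithin (x k) (Set.Ioi (x k)))
        (nhds (u (x k) * v' (x k) - u' (x k) * v (x k))) :=
      ((hu.sol.contR k hxk).mul (hv.sol.derivR k hxk)).sub
        ((hu.sol.derivR k hxk).mul (hv.sol.contR k hxk))
    have h2 : Tendsto (fun t => u t * v' t - u' t * v t) (nhdsWithin (x k) (Set.Ioi (x k)))
        (nhds 0) := by
      refine tendsto_const_nhds.congr' ?_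
      filter_upwards [Ioo_mem_nhdsGT_of_mem (Set.mem_Ico.mpr ⟨le_refl (x k), ht₁.1⟩)] with t ht
      rw [hWR t ⟨ht.1, lt_trans ht.2 ht₁.2⟩, claimR]
    exact tendsto_nhds_unique h1 h2
  have hfinal : (ω₂ k - ω₁ k) * (u (x k) * v (x k)) = 0 := by
    linear_combination eR - eL - (u (x k)) * ejv + (v (x k)) * eju
  have hne' : ω₂ k - ω₁ k ≠ 0 := sub_ne_zero.mpr (Ne.symm hne)
  exact (mul_eq_zero.mp hfinal).resolve_left hne'

lemma lyap_pos {u u' q : ℝ → ℝ} {α β M ξ : ℝ} (hαβ : α < β)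
    (hcont : ContinuousOn u (Set.Icc α β))
    (hd : ∀ t ∈ Set.Ioo α β, HasDerivAt u (u' t) t)
    (hd2 : ∀ t ∈ Set.Ioo α β, HasDerivAt u' (q t) t)
    (hq : ∀ t ∈ Set.Ioo α β, |q t| ≤ M * |u t|)
    (hM : 0 < M) (h0a : u α = 0) (h0b : u β = 0)
    (hξ : ξ ∈ Set.Ioo α β) (hmax : ∀ t ∈ Set.Icc α β, |u t| ≤ u ξ) (hpos : 0 < u ξ) :
    2 ≤ M * (ξ - α)^2 ∧ 2 ≤ M * (β - ξ)^2 := by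
  have hIoosub : Set.Ioo α β ⊆ Set.Icc α β := Set.Ioo_subset_Icc_self
  have hlocmax : IsLocalMax u ξ := by
    filter_upwards [isOpen_Ioo.mem_nhds hξ] with t ht
    exact le_trans (le_abs_self _) (hmax t (hIoosub ht))
  have h'ξ0 : u' ξ = 0 := hlocmax.hasDerivAt_eq_zero (hd ξ hξ)
  -- derivative bound
  have bound_u' : ∀ s ∈ Set.Ioo α β, |u' s| ≤ M * u ξ * |s - ξ| := by
    intro s hs
    rcases le_total ξ s with hc | hc
    · have hsub : Set.Icc ξ s ⊆ Set.Ioo α β := fun z hz =>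
        ⟨lt_of_lt_of_le hξ.1 hz.1, lt_of_le_of_lt hz.2 hs.2⟩
      have key := norm_image_sub_le_of_norm_deriv_le_segment'
        (f := u') (f' := q) (C := M * u ξ) (a := ξ) (b := s)
        (fun z hz => (hd2 z (hsub hz)).hasDerivWithinAt)
        (fun z hz => by
          have hz' : z ∈ Set.Ioo α β := hsub ⟨hz.1, le_of_lt hz.2⟩
          calc ‖q z‖ ≤ M * |u z| := hq z hz'
            _ ≤ M * u ξ := mul_le_mul_of_nonneg_left (hmax z (hIoosub hz')) (le_of_lt hM))
        s ⟨hc, le_refl s⟩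
      rw [h'ξ0, sub_zero] at key
      rwa [abs_of_nonneg (by linarith : (0:ℝ) ≤ s - ξ)]
    · have hsub : Set.Icc s ξ ⊆ Set.Ioo α β := fun z hz =>
        ⟨lt_of_lt_of_le hs.1 hz.1, lt_of_le_of_lt hz.2 hξ.2⟩
      have key := norm_image_sub_le_of_norm_deriv_le_segment'
        (f := u') (f' := q) (C := M * u ξ) (a := s) (b := ξ)
        (fun z hz => (hd2 z (hsub hz)).hasDerivWithinAt)
        (fun z hz => by
          have hz' : z ∈ Set.Ioo α β := hsub ⟨hz.1, le_of_lt hz.2⟩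
          calc ‖q z‖ ≤ M * |u z| := hq z hz'
            _ ≤ M * u ξ := mul_le_mul_of_nonneg_left (hmax z (hIoosub hz')) (le_of_lt hM))
        ξ ⟨hc, le_refl ξ⟩
      rw [h'ξ0] at key
      have : ‖(0:ℝ) - u' s‖ = |u' s| := by rw [zero_sub, norm_neg, Real.norm_eq_abs]
      rw [this] at key
      rwa [abs_of_nonpos (by linarith : s - ξ ≤ (0:ℝ)), neg_sub]
  constructor
  · -- left estimate via the auxiliary antitone function
    set ψ := fun s => u s + M * u ξ / 2 * (ξ - s)^2 with hψdef
    have hψd : ∀ s ∈ Set.Ioo α ξ, HasDerivAt ψ (u' s - M * u ξ * (ξ - s)) s := by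
      intro s hs
      have hs' : s ∈ Set.Ioo α β := ⟨hs.1, lt_trans hs.2 hξ.2⟩
      have h1 : HasDerivAt (fun s => (ξ - s)^2) (2 * (ξ - s)^1 * (-1)) s :=
        (((hasDerivAt_id s).const_sub ξ)).pow 2
      have h2 := (hd s hs').add (h1.const_mul (M * u ξ / 2))
      exact h2.congr_deriv (by ring)
    have hanti : AntitoneOn ψ (Set.Icc α ξ) := by
      have hIccsub : Set.Icc α ξ ⊆ Set.Icc α β := Set.Icc_subset_Icc_right (le_of_lt hξ.2)
      refine antitoneOn_of_deriv_nonpos (convex_Icc α ξ) ?_ ?_ ?_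
      · exact (hcont.mono hIccsub).add (Continuous.continuousOn (by continuity))
      · intro s hs
        rw [interior_Icc] at hs
        exact (hψd s hs).differentiableAt.differentiableWithinAt
      · intro s hs
        rw [interior_Icc] at hs
        rw [(hψd s hs).deriv]
        have hs' : s ∈ Set.Ioo α β := ⟨hs.1, lt_trans hs.2 hξ.2⟩
        have := bound_u' s hs'
        rw [abs_of_nonpos (by linarith [hs.2] : s - ξ ≤ (0:ℝ)), neg_sub] at this
        have h3 : u' s ≤ M * u ξ * (ξ - s) := le_trans (le_abs_self _) this
        linarith
    have := hanti (Set.left_mem_Icc.mpr (le_of_lt hξ.1)) (Set.right_mem_Icc.mpr (le_of_lt hξ.1))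
      (le_of_lt hξ.1)
    simp only [hψdef, h0a] at this
    -- u ξ + 0 ≤ 0 + M u ξ /2 (ξ - α)^2
    nlinarith [hpos, sq_nonneg (ξ - α)]
  · set φ := fun s => u s + M * u ξ / 2 * (s - ξ)^2 with hφdef
    have hφd : ∀ s ∈ Set.Ioo ξ β, HasDerivAt φ (u' s + M * u ξ * (s - ξ)) s := by
      intro s hs
      have hs' : s ∈ Set.Ioo α β := ⟨lt_trans hξ.1 hs.1, hs.2⟩
      have h1 : HasDerivAt (fun s => (s - ξ)^2) (2 * (s - ξ)^1 * 1) s :=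
        (((hasDerivAt_id s).sub_const ξ)).pow 2
      have h2 := (hd s hs').add (h1.const_mul (M * u ξ / 2))
      exact h2.congr_deriv (by ring)
    have hmono : MonotoneOn φ (Set.Icc ξ β) := by
      have hIccsub : Set.Icc ξ β ⊆ Set.Icc α β := Set.Icc_subset_Icc_left (le_of_lt hξ.1)
      refine monotoneOn_of_deriv_nonneg (convex_Icc ξ β) ?_ ?_ ?_
      · exact (hcont.mono hIccsub).add (Continuous.continuousOn (by continuity))
      · intro s hs
        rw [interior_Icc] at hs
        exact (hφd s hs).differentiableAt.differentiableWithinAt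
      · intro s hs
        rw [interior_Icc] at hs
        rw [(hφd s hs).deriv]
        have hs' : s ∈ Set.Ioo α β := ⟨lt_trans hξ.1 hs.1, hs.2⟩
        have := bound_u' s hs'
        rw [abs_of_nonneg (by linarith [hs.1] : (0:ℝ) ≤ s - ξ)] at this
        have h3 : -(M * u ξ * (s - ξ)) ≤ u' s := by
          have := neg_abs_le (u' s)
          linarith
        linarith
    have := hmono (Set.left_mem_Icc.mpr (le_of_lt hξ.2)) (Set.right_mem_Icc.mpr (le_of_lt hξ.2))
      (le_of_lt hξ.2)
    simp only [hφdef] at this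
    nlinarith [hpos, sq_nonneg (β - ξ)]

lemma lyap {u u' q : ℝ → ℝ} {α β M : ℝ} (hαβ : α < β)
    (hcont : ContinuousOn u (Set.Icc α β))
    (hd : ∀ t ∈ Set.Ioo α β, HasDerivAt u (u' t) t)
    (hd2 : ∀ t ∈ Set.Ioo α β, HasDerivAt u' (q t) t)
    (hq : ∀ t ∈ Set.Ioo α β, |q t| ≤ M * |u t|)
    (hM : 0 < M) (hlen : M * (β - α)^2 ≤ 4)
    (h0a : u α = 0) (h0b : u β = 0) (hnt : ∃ t ∈ Set.Ioo α β, u t ≠ 0) : False := by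
  obtain ⟨ξ, hξIcc, hξmax⟩ := isCompact_Icc.exists_isMaxOn
    (Set.nonempty_Icc.mpr (le_of_lt hαβ)) (hcont.abs)
  obtain ⟨t₀, ht₀, hu₀⟩ := hnt
  have hmax : ∀ t ∈ Set.Icc α β, |u t| ≤ |u ξ| := fun t ht => hξmax ht
  have hξpos : 0 < |u ξ| :=
    lt_of_lt_of_le (abs_pos.mpr hu₀) (hmax t₀ (Set.Ioo_subset_Icc_self ht₀))
  have hξne : u ξ ≠ 0 := abs_pos.mp hξpos
  have hξIoo : ξ ∈ Set.Ioo α β := by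
    rcases hξIcc.1.lt_or_eq with h1 | h1
    · rcases hξIcc.2.lt_or_eq with h2 | h2
      · exact ⟨h1, h2⟩
      · exact absurd (h2 ▸ h0b) hξne
    · exact absurd (h1 ▸ h0a : u ξ = 0) hξne
  rcases lt_or_gt_of_ne hξne with hneg | hpos
  · -- apply to -u
    have key := lyap_pos (u := fun t => -u t) (u' := fun t => -u' t) (q := fun t => -q t)
      hαβ hcont.neg (fun t ht => (hd t ht).neg) (fun t ht => (hd2 t ht).neg)
      (fun t ht => by
        simpa only [abs_neg] using hq t ht)
      hM (show -u α = 0 by rw [h0a, neg_zero]) (show -u β = 0 by rw [h0b, neg_zero]) hξIoo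
      (fun t ht => by
        simp only [abs_neg]
        rw [← abs_of_neg hneg] at *
        exact hmax t ht)
      (by simpa using hneg)
    have hA : 0 < ξ - α := by linarith [hξIoo.1]
    have hB : 0 < β - ξ := by linarith [hξIoo.2]
    nlinarith [key.1, key.2, mul_pos (mul_pos hM hA) hB]
  · have key := lyap_pos hαβ hcont hd hd2 hq hM h0a h0b hξIoo
      (fun t ht => by rw [← abs_of_pos hpos]; exact hmax t ht) hpos
    have hA : 0 < ξ - α := by linarith [hξIoo.1]
    have hB : 0 < β - ξ := by linarith [hξIoo.2]
    nlinarith [key.1, key.2, mul_pos (mul_pos hM hA) hB]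


/-- If the eigenfunction vanishes at an interaction point, the coupling there
is irrelevant. -/
lemma EigWit.change {ι : Type*} {V : ℝ → ℝ} {a b : ℝ} {x : ι → ℝ} {bca bcb : Option ℝ}
    {E : ℝ} {ω₁ : ι → ℝ} {u u' : ℝ → ℝ}
    (h : EigWit V a b x ω₁ bca bcb E u u') {k : ι} (hzero : u (x k) = 0)
    {ω₂ : ι → ℝ} (hagree : ∀ j, j ≠ k → ω₂ j = ω₁ j) :
    EigWit V a b x ω₂ bca bcb E u u' where
  nontriv := h.nontriv
  sq := h.sq
  bc_a := h.bc_a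
  bc_b := h.bc_b
  sol := { h.sol with
    jump := by
      intro j hj
      obtain ⟨dm, hdm, hjump⟩ := h.sol.jump j hj
      by_cases hjk : j = k
      · subst hjk
        rw [hzero, mul_zero] at hjump ⊢
        exact ⟨dm, hdm, hjump⟩
      · rw [hagree j hjk]
        exact ⟨dm, hdm, hjump⟩ }

/-- An eigenfunction vanishing at two adjacent interaction points at distance
`≤ 2/√(K+|E|)` cannot exist. -/
lemma final_contra {ι : Type} [Countable ι] {V : ℝ → ℝ} {a b : ℝ} {x : ι → ℝ}
    {bca bcb : Option ℝ} {E : ℝ} {M : ℝ}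
    (hx : ∀ n, x n ∈ Set.Ioo a b)
    (hdisc : ∀ Kc : Set ℝ, IsCompact Kc → Kc ⊆ Set.Ioo a b → {n | x n ∈ Kc}.Finite)
    (hMb : ∀ t ∈ Set.Ioo a b, |V t - E| ≤ M) (hM : 0 < M)
    {kn km : ι} (hord : x kn < x km)
    (hadj : ∀ j, x j ∉ Set.Ioo (x kn) (x km))
    (hlen : M * (x km - x kn)^2 ≤ 4)
    {ω : ι → ℝ} {u u' : ℝ → ℝ} (hu : EigWit V a b x ω bca bcb E u u')
    (h0n : u (x kn) = 0) (h0m : u (x km) = 0) : False := by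
  have hnab : x kn ∈ Set.Ioo a b := hx kn
  have hmab : x km ∈ Set.Ioo a b := hx km
  have hsub : Set.Ioo (x kn) (x km) ⊆ Set.Ioo a b := fun t ht =>
    ⟨lt_trans hnab.1 ht.1, lt_trans ht.2 hmab.2⟩
  have hjf : ∀ t ∈ Set.Ioo (x kn) (x km), ∀ j, t ≠ x j := by
    intro t ht j heq
    exact hadj j (heq ▸ ht)
  by_cases hz : ∀ t ∈ Set.Ioo (x kn) (x km), u t = 0
  · -- then u ≡ 0 everywhere, contradicting nontriviality
    obtain ⟨p, hp, hpx⟩ := exists_noninteraction (x := x) hord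
    have hpab : p ∈ Set.Ioo a b := hsub hp
    have hup : u p = 0 := hz p hp
    have hu'p : u' p = 0 := by
      have hder := hu.sol.deriv p hpab hpx
      have hev : (fun _ => (0:ℝ)) =ᶠ[nhds p] u := by
        filter_upwards [isOpen_Ioo.mem_nhds hp] with τ hτ
        exact (hz τ hτ).symm
      have hzd : HasDerivAt (fun _ => (0:ℝ)) (u' p) p := hder.congr_of_eventuallyEq hev
      exact (hzd.unique (hasDerivAt_const p 0)).symm ▸ rfl
    have hvan := hu.sol.vanish hMb hdisc hpab hpx hup hu'p
    obtain ⟨t₀, ht₀, hnt⟩ := hu.nontriv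
    exact hnt (hvan t₀ ht₀)
  · push_neg at hz
    -- continuity of u on the closed interval
    have hcont : ContinuousOn u (Set.Icc (x kn) (x km)) := by
      intro t ht
      rcases eq_or_lt_of_le ht.1 with heq | hlt1
      · rw [← heq]
        have hR : ContinuousWithinAt u (Set.Ioi (x kn)) (x kn) := hu.sol.contR kn hnab
        exact (continuousWithinAt_Ioi_iff_Ici.mp hR).mono Set.Icc_subset_Ici_self
      · rcases eq_or_lt_of_le ht.2 with heq2 | hlt2
        · rw [heq2]
          have hL : ContinuousWithinAt u (Set.Iio (x km)) (x km) := hu.sol.contL km hmab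
          exact (continuousWithinAt_Iio_iff_Iic.mp hL).mono Set.Icc_subset_Iic_self
        · exact (hu.sol.contAt (hsub ⟨hlt1, hlt2⟩)).continuousWithinAt
    refine lyap hord hcont
      (fun t ht => hu.sol.deriv t (hsub ht) (hjf t ht))
      (fun t ht => hu.sol.ode t (hsub ht) (hjf t ht))
      (fun t ht => ?_) hM hlen h0n h0m hz
    have h1 : V t * u t - E * u t = (V t - E) * u t := by ring
    rw [h1, abs_mul]
    exact mul_le_mul_of_nonneg_right (hMb t (hsub ht)) (abs_nonneg _)

/-- Sets of small measure have at most one point... auxiliary: a set of nonzero measure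
w.r.t. an atomless measure contains two distinct points. -/
lemma two_points {ν : MeasureTheory.Measure ℝ} (hatom : ∀ r : ℝ, ν {r} = 0) {T : Set ℝ}
    (hT : ν T ≠ 0) : ∃ s t : ℝ, s ≠ t ∧ s ∈ T ∧ t ∈ T := by
  by_contra hcon
  push_neg at hcon
  rcases Set.eq_empty_or_nonempty T with rfl | ⟨s₀, hs₀⟩
  · exact hT measure_empty
  · have hsub : T ⊆ {s₀} := by
      intro t ht
      by_contra hne
      rw [Set.mem_singleton_iff] at hne
      exact (hcon t s₀ hne ht) hs₀
    exact hT (le_antisymm (le_trans (measure_mono hsub) (le_of_eq (hatom s₀))) (zero_le))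

/-- **Lyapunov / disconjugacy criterion.**
If `|V| ≤ K` on `(a,b)` and some interval `J = [c,d] ⊆ (a,b)` of length
`|J| ≤ 2/√(K+|E|)` contains at least two interaction points, then `P(B) = 0` for
every measurable subset `B` of `A(E) = {ω : E ∈ σ_p(H_ω)}`. -/
theorem lyapunov_criterion_null
    {ι : Type} [Countable ι] [DecidableEq ι]
    (V : ℝ → ℝ) (a b : ℝ) (x : ι → ℝ) (bca bcb : Option ℝ) (E : ℝ)
    (hab : a < b)
    (hx : ∀ n, x n ∈ Set.Ioo a b) (hinj : Function.Injective x)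
    (hdisc : ∀ K : Set ℝ, IsCompact K → K ⊆ Set.Ioo a b → {n | x n ∈ K}.Finite)
    -- limit point case at an endpoint where no boundary condition is imposed
    (hlpa : bca = none → ∀ (ω : ι → ℝ) (lam : ℝ), ∃ f f' : ℝ → ℝ,
      DeltaODE V a b x ω lam f f' ∧ (∃ t ∈ Set.Ioo a b, f t ≠ 0) ∧
      ∀ c ∈ Set.Ioo a b, ¬ MemLp f 2 (volume.restrict (Set.Ioo a c)))
    (hlpb : bcb = none → ∀ (ω : ι → ℝ) (lam : ℝ), ∃ f f' : ℝ → ℝ,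
      DeltaODE V a b x ω lam f f' ∧ (∃ t ∈ Set.Ioo a b, f t ≠ 0) ∧
      ∀ c ∈ Set.Ioo a b, ¬ MemLp f 2 (volume.restrict (Set.Ioo c b)))
    -- the randomness: `P` is the (completed) product of the atomless probability
    -- measures `μ n`; `hP` expresses the Fubini disintegration of `P` along each
    -- coordinate
    (μ : ι → Measure ℝ) [∀ n, IsProbabilityMeasure (μ n)]
    (hatomless : ∀ (n : ι) (r : ℝ), μ n {r} = 0)
    (P : Measure (ι → ℝ)) [IsProbabilityMeasure P]
    (hP : ∀ (n : ι) (S : Set (ι → ℝ)), MeasurableSet S →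
      P S = ∫⁻ ω, μ n {t : ℝ | Function.update ω n t ∈ S} ∂P)
    (K : ℝ) (hK : ∀ t ∈ Set.Ioo a b, |V t| ≤ K)
    (c d : ℝ) (hcd : c ≤ d) (hJ : Set.Icc c d ⊆ Set.Ioo a b)
    (hlen : d - c ≤ 2 / Real.sqrt (K + |E|))
    (hpts : ∃ n m : ι, n ≠ m ∧ x n ∈ Set.Icc c d ∧ x m ∈ Set.Icc c d) :
    ∀ B : Set (ι → ℝ), NullMeasurableSet B P →
      B ⊆ {ω | ∃ u u' : ℝ → ℝ, EigWit V a b x ω bca bcb E u u'} → P B = 0 := by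
  -- ============ setup: bounds ============
  set M := K + |E| with hMdef
  have hM : ∀ t ∈ Set.Ioo a b, |V t - E| ≤ M := by
    intro t ht
    calc |V t - E| ≤ |V t| + |E| := abs_sub _ _
      _ ≤ K + |E| := by linarith [hK t ht]
  have hKnn : 0 ≤ K := le_trans (abs_nonneg _) (hK ((a+b)/2) ⟨by linarith, by linarith⟩)
  have hMnn : 0 ≤ M := by rw [hMdef]; positivity
  -- ============ adjacent pair selection ============
  obtain ⟨n₀, m₀, hnm₀, hn₀, hm₀⟩ := hpts
  have hFfin : {n | x n ∈ Set.Icc c d}.Finite := hdisc _ isCompact_Icc hJ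
  have hIfin : (x '' {n | x n ∈ Set.Icc c d}).Finite := hFfin.image x
  set S₀ : Finset ℝ := hIfin.toFinset with hS₀def
  have hn₀S : x n₀ ∈ S₀ := hIfin.mem_toFinset.mpr ⟨n₀, hn₀, rfl⟩
  have hm₀S : x m₀ ∈ S₀ := hIfin.mem_toFinset.mpr ⟨m₀, hm₀, rfl⟩
  have hxnm : x n₀ ≠ x m₀ := fun h => hnm₀ (hinj h)
  have hS₀ne : S₀.Nonempty := ⟨x n₀, hn₀S⟩
  set q₁ := S₀.min' hS₀ne with hq₁def
  have hq₁S : q₁ ∈ S₀ := S₀.min'_mem hS₀ne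
  have hScard : 1 < S₀.card := Finset.one_lt_card.mpr ⟨x n₀, hn₀S, x m₀, hm₀S, hxnm⟩
  have hS'ne : (S₀.erase q₁).Nonempty := by
    rw [← Finset.card_pos, Finset.card_erase_of_mem hq₁S]
    omega
  set q₂ := (S₀.erase q₁).min' hS'ne with hq₂def
  have hq₂S' : q₂ ∈ S₀.erase q₁ := (S₀.erase q₁).min'_mem hS'ne
  have hq₂S : q₂ ∈ S₀ := Finset.mem_of_mem_erase hq₂S'
  have hq₂ne : q₂ ≠ q₁ := Finset.ne_of_mem_erase hq₂S'
  have hq₁₂ : q₁ < q₂ := lt_of_le_of_ne (S₀.min'_le q₂ hq₂S) (Ne.symm hq₂ne)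
  obtain ⟨kn, hknF, hknq⟩ : ∃ n, x n ∈ Set.Icc c d ∧ x n = q₁ := by
    have := hIfin.mem_toFinset.mp hq₁S
    obtain ⟨n, hn, hn2⟩ := this
    exact ⟨n, hn, hn2⟩
  obtain ⟨km, hkmF, hkmq⟩ : ∃ n, x n ∈ Set.Icc c d ∧ x n = q₂ := by
    have := hIfin.mem_toFinset.mp hq₂S
    obtain ⟨n, hn, hn2⟩ := this
    exact ⟨n, hn, hn2⟩
  have hord : x kn < x km := by rw [hknq, hkmq]; exact hq₁₂
  have hadj : ∀ j, x j ∉ Set.Ioo (x kn) (x km) := by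
    intro j hj
    rw [hknq, hkmq] at hj
    have hjIcc : x j ∈ Set.Icc c d :=
      ⟨le_trans hknF.1 (by rw [hknq]; exact le_of_lt hj.1),
       le_trans (le_of_lt hj.2) (by rw [← hkmq]; exact hkmF.2)⟩
    have hjS : x j ∈ S₀ := hIfin.mem_toFinset.mpr ⟨j, hjIcc, rfl⟩
    have hne1 : x j ≠ q₁ := by
      intro h
      rw [h] at hj
      exact lt_irrefl _ hj.1
    have hjS' : x j ∈ S₀.erase q₁ := Finset.mem_erase.mpr ⟨hne1, hjS⟩
    exact absurd ((S₀.erase q₁).min'_le _ hjS') (not_le.mpr hj.2)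
  -- positivity of M and the length bound
  have hMpos : 0 < M := by
    rcases eq_or_lt_of_le hMnn with heq | hlt
    · exfalso
      rw [← heq] at hlen
      rw [Real.sqrt_zero, div_zero] at hlen
      have : c = d := le_antisymm hcd (by linarith)
      have h1 : x kn = c := le_antisymm (this ▸ hknF.2) hknF.1
      have h2 : x km = c := le_antisymm (this ▸ hkmF.2) hkmF.1
      rw [h1, h2] at hord
      exact lt_irrefl _ hord
    · exact hlt
  have hlen2 : M * (x km - x kn)^2 ≤ 4 := by
    have h1 : x km - x kn ≤ d - c := by
      have := hknF.1
      have := hkmF.2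
      linarith
    have h2 : 0 ≤ x km - x kn := by linarith [hord]
    have hsq : Real.sqrt M > 0 := Real.sqrt_pos.mpr hMpos
    have h3 : x km - x kn ≤ 2 / Real.sqrt M := le_trans h1 hlen
    have h4 : (x km - x kn)^2 ≤ (2 / Real.sqrt M)^2 := by
      apply sq_le_sq' _ h3
      linarith [div_nonneg (le_of_lt (by norm_num : (0:ℝ) < 2)) (le_of_lt hsq)]
    have h5 : (2 / Real.sqrt M)^2 = 4 / M := by
      rw [div_pow, Real.sq_sqrt (le_of_lt hMpos)]
      norm_num
    rw [h5] at h4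
    calc M * (x km - x kn)^2 ≤ M * (4 / M) := mul_le_mul_of_nonneg_left h4 (le_of_lt hMpos)
      _ = 4 := by field_simp
  -- ============ measure-theoretic skeleton ============
  intro B hBnull hBsub
  by_contra hPB
  obtain ⟨S, hSsub, hSmeas, hSae⟩ := hBnull.exists_measurable_subset_ae_eq
  have hPS : P S ≠ 0 := by rw [measure_congr hSae]; exact hPB
  -- measurability of the update maps
  have hupd : ∀ j : ι, Measurable (fun p : (ι → ℝ) × ℝ => Function.update p.1 j p.2) := by
    intro j
    refine measurable_pi_iff.mpr fun k => ?_
    by_cases hk : k = j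
    · subst hk
      simp only [Function.update_self]
      exact measurable_snd
    · simp only [Function.update_of_ne hk]
      exact (measurable_pi_apply k).comp measurable_fst
  -- the fiber measure in direction km
  set g : (ι → ℝ) → ENNReal := fun ω => μ km {t : ℝ | Function.update ω km t ∈ S} with hgdef
  have hg : Measurable g := by
    have hpre : MeasurableSet ((fun p : (ι → ℝ) × ℝ => Function.update p.1 km p.2) ⁻¹' S) :=
      (hupd km) hSmeas
    exact measurable_measure_prodMk_left hpre
  have hgne : ¬ (g =ᵐ[P] 0) := by
    intro hcontra
    apply hPS
    rw [hP km S hSmeas]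
    exact (lintegral_eq_zero_iff hg).mpr hcontra
  set Wset := {ω : ι → ℝ | g ω ≠ 0} with hWdef
  have hWmeas : MeasurableSet Wset := hg (measurableSet_singleton 0).compl
  have hPW : P Wset ≠ 0 := by
    intro hcontra
    exact hgne (by rwa [Filter.EventuallyEq, ae_iff])
  -- Wset ⊆ {ω admitting an eigenfunction vanishing at x km}
  have hWsub : ∀ ω ∈ Wset, ∃ w w' : ℝ → ℝ,
      EigWit V a b x ω bca bcb E w w' ∧ w (x km) = 0 := by
    intro ω hω
    obtain ⟨s, t, hst, hsT, htT⟩ := two_points (hatomless km) hω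
    obtain ⟨u, u', hu⟩ := hBsub (hSsub hsT)
    obtain ⟨v, v', hv⟩ := hBsub (hSsub htT)
    have hagree : ∀ j, j ≠ km → Function.update ω km s j = Function.update ω km t j := by
      intro j hj
      rw [Function.update_of_ne hj, Function.update_of_ne hj]
    have hne : Function.update ω km s km ≠ Function.update ω km t km := by
      rw [Function.update_self, Function.update_self]
      exact hst
    have hzero := coupling_vanish hab hx hdisc hlpa hlpb hK hagree hne hu hv
    have hmagree : ∀ j, j ≠ km → ω j = Function.update ω km s j := fun j hj =>
      (Function.update_of_ne hj s ω).symm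
    have hmagree' : ∀ j, j ≠ km → ω j = Function.update ω km t j := fun j hj =>
      (Function.update_of_ne hj t ω).symm
    rcases mul_eq_zero.mp hzero with h | h
    · exact ⟨u, u', hu.change h hmagree, h⟩
    · exact ⟨v, v', hv.change h hmagree', h⟩
  -- second application of the disintegration, now in direction kn
  have hstep2 : ¬ ∀ ω : ι → ℝ, μ kn {t : ℝ | Function.update ω kn t ∈ Wset} = 0 := by
    intro hcontra
    apply hPW
    rw [hP kn Wset hWmeas]
    rw [lintegral_congr hcontra, lintegral_zero]
  push_neg at hstep2
  obtain ⟨ω, hω⟩ := hstep2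
  obtain ⟨s, t, hst, hsT, htT⟩ := two_points (hatomless kn) hω
  obtain ⟨u, u', hu, hum⟩ := hWsub _ hsT
  obtain ⟨v, v', hv, hvm⟩ := hWsub _ htT
  have hagree : ∀ j, j ≠ kn → Function.update ω kn s j = Function.update ω kn t j := by
    intro j hj
    rw [Function.update_of_ne hj, Function.update_of_ne hj]
  have hne : Function.update ω kn s kn ≠ Function.update ω kn t kn := by
    rw [Function.update_self, Function.update_self]
    exact hst
  have hzero := coupling_vanish hab hx hdisc hlpa hlpb hK hagree hne hu hv
  rcases mul_eq_zero.mp hzero with h | h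
  · exact final_contra hx hdisc hM hMpos hord hadj hlen2 hu h hum
  · exact final_contra hx hdisc hM hMpos hord hadj hlen2 hv h hvm
end

section
/- For Sturm-Liouville operators with a δ'-interaction of strength α at an interior point p (conditions u'(p+)=u'(p-), u(p+)-u(p-)=α u'(p)), define the modified diagonal Green function G̃_α(z;p,p) = u'_{a,α}(z,p) u'_{b,α}(z,p) / W_p(u_{a,α}(z), u_{b,α}(z)). Then G̃_α(z;p,p) = G̃_0(z;p,p) / (1 + α G̃_0(z;p,p)). -/
open Filter Topology Set

/-- **The modified diagonal Green function with one δ'-interaction.**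
Let `u_{a,α}, u_{b,α}` solve `-u'' + V u = z u` on `[a,b]` with a δ'-interaction of
strength `α` at `p` (conditions `u'(p+) = u'(p-)`, `u(p+) - u(p-) = α u'(p)`),
satisfying fixed boundary conditions at `a` resp. `b`, and let `u_{a,0}, u_{b,0}` be
the corresponding solutions without interaction, agreeing with them on `x ≤ p` resp.
`x ≥ p`.  With `G̃_α(z;p,p) = u'_{a,α}(p) u'_{b,α}(p) / W_p(u_{a,α},u_{b,α})`,
one has `G̃_α(z;p,p) = G̃₀(z;p,p) / (1 + α G̃₀(z;p,p))`.
(Values at `p` are right limits; `W₀(p) ≠ 0` so that `G̃₀` is defined.) -/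
theorem green_function_one_delta_prime_interaction
    (V : ℝ → ℝ) (a b p : ℝ) (α : ℝ) (z : ℂ) (θ γ : ℝ)
    (hab : a < b) (hp : p ∈ Ioo a b) (hV : MeasureTheory.IntegrableOn V (Icc a b))
    (ua₀ ua₀' uaα uaα' ub₀ ub₀' ubα ubα' : ℝ → ℂ)
    -- free solutions (no interaction): classical solutions on all of [a,b]
    (h0a : ∀ t ∈ Icc a b, HasDerivAt ua₀ (ua₀' t) t ∧
      HasDerivAt ua₀' ((V t : ℂ) * ua₀ t - z * ua₀ t) t)
    (h0b : ∀ t ∈ Icc a b, HasDerivAt ub₀ (ub₀' t) t ∧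
      HasDerivAt ub₀' ((V t : ℂ) * ub₀ t - z * ub₀ t) t)
    -- interacting solutions: classical away from p
    (hαa : ∀ t ∈ Icc a b, t ≠ p → HasDerivAt uaα (uaα' t) t ∧
      HasDerivAt uaα' ((V t : ℂ) * uaα t - z * uaα t) t)
    (hαb : ∀ t ∈ Icc a b, t ≠ p → HasDerivAt ubα (ubα' t) t ∧
      HasDerivAt ubα' ((V t : ℂ) * ubα t - z * ubα t) t)
    -- δ'-interaction conditions at p: u' continuous, u jumps by α u'(p)
    -- (values at p are right limits)
    (hconta' : Tendsto uaα' (𝓝[<] p) (𝓝 (uaα' p)))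
    (hcontb' : Tendsto ubα' (𝓝[<] p) (𝓝 (ubα' p)))
    (hjumpa : ∃ um, Tendsto uaα (𝓝[<] p) (𝓝 um) ∧ uaα p - um = (α : ℂ) * uaα' p)
    (hjumpb : ∃ um, Tendsto ubα (𝓝[<] p) (𝓝 um) ∧ ubα p - um = (α : ℂ) * ubα' p)
    -- boundary conditions at a and at b
    (hbca0 : ua₀ a * (Real.cos θ : ℂ) + ua₀' a * (Real.sin θ : ℂ) = 0)
    (hbcaα : uaα a * (Real.cos θ : ℂ) + uaα' a * (Real.sin θ : ℂ) = 0)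
    (hbcb0 : ub₀ b * (Real.cos γ : ℂ) + ub₀' b * (Real.sin γ : ℂ) = 0)
    (hbcbα : ubα b * (Real.cos γ : ℂ) + ubα' b * (Real.sin γ : ℂ) = 0)
    -- agreement: u_{a,α} = u_{a,0} on x < p (x ≤ p for the derivative), and
    -- u_{b,α} = u_{b,0} on x ≥ p
    (heqa : ∀ t < p, uaα t = ua₀ t) (heqa' : ∀ t ≤ p, uaα' t = ua₀' t)
    (heqb : ∀ t, p ≤ t → ubα t = ub₀ t ∧ ubα' t = ub₀' t)
    -- the free Wronskian does not vanish (z is not an eigenvalue of H₀)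
    (hW₀ : ua₀ p * ub₀' p - ua₀' p * ub₀ p ≠ 0) :
    uaα' p * ubα' p / (uaα p * ubα' p - uaα' p * ubα p)
      = (ua₀' p * ub₀' p / (ua₀ p * ub₀' p - ua₀' p * ub₀ p))
        / (1 + (α : ℂ) * (ua₀' p * ub₀' p / (ua₀ p * ub₀' p - ua₀' p * ub₀ p))) := by
  have hpab : p ∈ Icc a b := ⟨le_of_lt hp.1, le_of_lt hp.2⟩
  have hb := heqb p le_rfl
  have ha' : uaα' p = ua₀' p := heqa' p le_rfl
  -- the left limit of uaα at p is ua₀ p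
  have hcont : Tendsto ua₀ (𝓝[<] p) (𝓝 (ua₀ p)) :=
    ((h0a p hpab).1.continuousAt.continuousWithinAt).tendsto
  have hcontα : Tendsto uaα (𝓝[<] p) (𝓝 (ua₀ p)) := by
    refine hcont.congr' ?_
    filter_upwards [self_mem_nhdsWithin] with t ht
    exact (heqa t ht).symm
  obtain ⟨um, hum, hjump⟩ := hjumpa
  have hum' : um = ua₀ p := tendsto_nhds_unique hum hcontα
  have hap : uaα p = ua₀ p + (α : ℂ) * ua₀' p := by
    have := hjump
    rw [hum', ha'] at this
    linear_combination this
  rw [ha', hb.1, hb.2, hap]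
  set A := ua₀ p
  set A' := ua₀' p
  set B := ub₀ p
  set B' := ub₀' p
  set W : ℂ := A * B' - A' * B with hW
  have hden : (A + (α : ℂ) * A') * B' - A' * B = W + (α : ℂ) * (A' * B') := by ring
  rw [hden]
  by_cases h : W + (α : ℂ) * (A' * B') = 0
  · rw [h, div_zero]
    have : 1 + (α : ℂ) * (A' * B' / W) = (W + (α : ℂ) * (A' * B')) / W := by
      field_simp
    rw [this, h, zero_div, div_zero]
  · field_simp
end
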